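/- arXiv:1507.00599 — 9 statements merged into one kernel-verified Lean document; each statement's English description precedes it below -/
import Mathlib

section
/- For every p ∈ ℕ₀, every integer s ≥ 1, every x ≥ 0 and every u ∈ ℝ, one has | ℙ( ⋂_{i=0}^{s−1} f^{-i}( U_{p,0}(u,x)ᶜ ) ) − ℙ( ⋂_{i=0}^{s−1} f^{-i}( R_{p,0}(u,x)ᶜ ) ) | ≤ p · ℙ( U_{p,0}(u,x) ). -/
open MeasureTheory Set Filter

noncomputable section

namespace Paper

variable {X : Type*}

/-- First hitting time (≥ 1) to `A`, valued in `ℕ∞` (`⊤` if the orbit never hits `A`). -/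
def hitTime (f : X → X) (A : Set X) (x : X) : ℕ∞ :=
  sInf ((fun j : ℕ => (j : ℕ∞)) '' {j : ℕ | 1 ≤ j ∧ f^[j] x ∈ A})

/-- The induced (first-hitting) map `F_A`. -/
def inducedMap (f : X → X) (A : Set X) (x : X) : X :=
  f^[(hitTime f A x).toNat] x

/-- Waiting times: `wait f A 1 = hitTime f A` and, for `i ≥ 1`,
`wait f A (i+1) x = hitTime f A ((inducedMap f A)^[i] x)`. -/
def wait (f : X → X) (A : Set X) (i : ℕ) (x : X) : ℕ∞ :=
  hitTime f A ((inducedMap f A)^[i - 1] x)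

/-- `j`-th hitting time `r_A^j = w_A^1 + ⋯ + w_A^j`, with `r_A^0 = 0`. -/
def hitIter (f : X → X) (A : Set X) (j : ℕ) (x : X) : ℕ∞ :=
  ∑ i ∈ Finset.range j, wait f A (i + 1) x

/-- `U(u) = {X₀ > u}`. -/
def Uset (φ : X → ℝ) (u : ℝ) : Set X := {x | u < φ x}

/-- `U_p^{(κ)}(u)`. -/
def Upk (f : X → X) (φ : X → ℝ) (p : ℕ) (u : ℝ) (κ : ℕ) : Set X :=
  Uset φ u ∩ ⋂ i ∈ Finset.Icc 1 κ, {x | wait f (Uset φ u) i x ≤ (p : ℕ∞)}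

/-- `U_p^{(∞)}(u)`. -/
def UpInf (f : X → X) (φ : X → ℝ) (p : ℕ) (u : ℝ) : Set X :=
  ⋂ κ, Upk f φ p u κ

/-- `Q_{p,0}^{κ}(u)`. -/
def Qk (f : X → X) (φ : X → ℝ) (p : ℕ) (u : ℝ) (κ : ℕ) : Set X :=
  Upk f φ p u κ ∩ {x | (p : ℕ∞) < wait f (Uset φ u) (κ + 1) x}

/-- Accumulated excess `Σ_{j=0}^{r_{U(u)}^{κ}} (X_j − u)_+` (the AOT mark over a cluster). -/
def excessSum (f : X → X) (φ : X → ℝ) (u : ℝ) (κ : ℕ) (x : X) : ℝ :=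
  ∑ j ∈ Finset.range ((hitIter f (Uset φ u) κ x).toNat + 1), max (φ (f^[j] x) - u) 0

/-- `U_{p,0}^{κ}(u,x)` for the AOT mark. -/
def Uk (f : X → X) (φ : X → ℝ) (p : ℕ) (u : ℝ) (κ : ℕ) (t : ℝ) : Set X :=
  Qk f φ p u κ ∩ {x | t < excessSum f φ u κ x}

/-- `U_{p,0}(u,x)`. -/
def U0 (f : X → X) (φ : X → ℝ) (p : ℕ) (u : ℝ) (t : ℝ) : Set X :=
  (⋃ κ, Uk f φ p u κ t) ∪ UpInf f φ p u

/-- `R_{p,0}(u,x)`. -/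
def R0 (f : X → X) (φ : X → ℝ) (p : ℕ) (u : ℝ) (t : ℝ) : Set X :=
  U0 f φ p u t ∩ {x | (p : ℕ∞) < hitTime f (U0 f φ p u t) x}

/-- `δ_{p,s,u}(x)` (with `δ_{0,s,u} := 0`). -/
def delta [MeasurableSpace X] (μ : Measure X) (f : X → X) (φ : X → ℝ) (p s : ℕ) (u t : ℝ) : ℝ :=
  if p = 0 then 0
  else (p : ℝ) * ∑ κ ∈ Finset.range (s / p + 1), ((κ : ℝ) + 1) * (μ (Uk f φ p u κ t)).toReal
      + ((s : ℝ) + (p : ℝ)) * (∑' κ : ℕ, μ (Uk f φ p u (κ + s / p + 1) t)).toReal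



section Aux

theorem hitTime_le_iff {f : X → X} {A : Set X} {x : X} {n : ℕ} :
    hitTime f A x ≤ (n : ℕ∞) ↔ ∃ j, 1 ≤ j ∧ j ≤ n ∧ f^[j] x ∈ A := by
  constructor
  · intro h
    by_contra hc
    push_neg at hc
    have hlt : (n : ℕ∞) < hitTime f A x := by
      have h1 : (((n + 1 : ℕ)) : ℕ∞) ≤ hitTime f A x := by
        apply le_sInf
        rintro b ⟨j, ⟨hj1, hjA⟩, rfl⟩
        have hnj : n < j := by
          by_contra hle
          push_neg at hle
          exact hc j hj1 hle hjA
        show ((n + 1 : ℕ) : ℕ∞) ≤ (j : ℕ∞)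
        exact_mod_cast hnj
      have h2 : (n : ℕ∞) < ((n + 1 : ℕ) : ℕ∞) := by exact_mod_cast Nat.lt_succ_self n
      exact lt_of_lt_of_le h2 h1
    exact absurd h hlt.not_ge
  · rintro ⟨j, hj1, hjn, hjA⟩
    have h1 : hitTime f A x ≤ (j : ℕ∞) := sInf_le ⟨j, ⟨hj1, hjA⟩, rfl⟩
    exact h1.trans (by exact_mod_cast hjn)

variable [MeasurableSpace X]

theorem measurableSet_hitTime_le {f : X → X} {A : Set X} (hf : Measurable f)
    (hA : MeasurableSet A) (n : ℕ) : MeasurableSet {x | hitTime f A x ≤ (n : ℕ∞)} := by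
  have h : {x | hitTime f A x ≤ (n : ℕ∞)} = ⋃ j ∈ Finset.Icc 1 n, f^[j] ⁻¹' A := by
    ext x
    simp only [Set.mem_setOf_eq, hitTime_le_iff, Set.mem_iUnion, Finset.mem_Icc,
      Set.mem_preimage]
    tauto
  rw [h]
  exact MeasurableSet.biUnion (Finset.countable_toSet _) fun j _ => (hf.iterate j) hA

/-- From `{h ≤ n}` measurable for all naturals, deduce `{h = e}` measurable for all `e : ℕ∞`. -/
theorem measurableSet_eq_of_le {h : X → ℕ∞}
    (hle : ∀ n : ℕ, MeasurableSet {x | h x ≤ (n : ℕ∞)}) (e : ℕ∞) :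
    MeasurableSet {x | h x = e} := by
  induction e using ENat.recTopCoe with
  | top =>
    have heq : {x | h x = ⊤} = ⋂ n : ℕ, {x | h x ≤ (n : ℕ∞)}ᶜ := by
      ext x
      simp only [Set.mem_setOf_eq, Set.mem_iInter, Set.mem_compl_iff]
      constructor
      · intro hx n
        rw [hx]
        simp [top_le_iff]
      · intro hx
        by_contra hne
        obtain ⟨m, hm⟩ := WithTop.ne_top_iff_exists.1 hne
        exact hx m (le_of_eq hm.symm)
    rw [heq]
    exact MeasurableSet.iInter fun n => (hle n).compl
  | coe m =>
    have heq : {x | h x = (m : ℕ∞)} =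
        {x | h x ≤ (m : ℕ∞)} ∩ ⋂ k ∈ Finset.range m, {x | h x ≤ (k : ℕ∞)}ᶜ := by
      ext x
      simp only [Set.mem_setOf_eq, Set.mem_inter_iff, Set.mem_iInter, Set.mem_compl_iff,
        Finset.mem_range]
      constructor
      · intro hx
        refine ⟨le_of_eq hx, fun k hk hc => ?_⟩
        rw [hx] at hc
        have : m ≤ k := by exact_mod_cast hc
        omega
      · rintro ⟨h1, h2⟩
        have hne : h x ≠ ⊤ := by
          intro ht
          rw [ht] at h1
          simp [top_le_iff] at h1
        have hj : ((h x).toNat : ℕ∞) = h x := ENat.coe_toNat hne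
        rw [← hj] at h1 ⊢
        have hjm : (h x).toNat ≤ m := by exact_mod_cast h1
        rcases lt_or_eq_of_le hjm with hlt | heq'
        · exact absurd (le_of_eq hj.symm) (h2 _ hlt)
        · exact_mod_cast heq'
    rw [heq]
    exact (hle m).inter (MeasurableSet.biInter (Finset.countable_toSet _)
      fun k _ => (hle k).compl)

/-- A `toNat` of an `ℕ∞`-valued map with measurable fibers is measurable. -/
theorem measurable_toNat_of {h : X → ℕ∞}
    (hh : ∀ e : ℕ∞, MeasurableSet {x | h x = e}) :
    Measurable fun x => (h x).toNat := by
  apply measurable_to_countable'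
  intro k
  have heq : (fun x => (h x).toNat) ⁻¹' {k} =
      {x | h x = (k : ℕ∞)} ∪ {x | h x = ⊤ ∧ k = 0} := by
    ext x
    simp only [Set.mem_preimage, Set.mem_singleton_iff, Set.mem_union, Set.mem_setOf_eq]
    constructor
    · intro hx
      by_cases htop : h x = ⊤
      · right
        refine ⟨htop, ?_⟩
        rw [htop] at hx
        simpa using hx.symm
      · left
        rw [← hx, ENat.coe_toNat htop]
    · rintro (hx | ⟨hx, rfl⟩)
      · rw [hx, ENat.toNat_coe]
      · rw [hx]; rfl
  rw [heq]
  refine (hh _).union ?_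
  by_cases hk : k = 0
  · subst hk
    have : {x | h x = ⊤ ∧ (0 : ℕ) = 0} = {x | h x = ⊤} := by ext x; simp
    rw [this]; exact hh ⊤
  · have : {x | h x = ⊤ ∧ k = 0} = ∅ := by ext x; simp [hk]
    rw [this]; exact MeasurableSet.empty

theorem measurableSet_hitTime_eq {f : X → X} {A : Set X} (hf : Measurable f)
    (hA : MeasurableSet A) (e : ℕ∞) : MeasurableSet {x | hitTime f A x = e} :=
  measurableSet_eq_of_le (measurableSet_hitTime_le hf hA) e

theorem measurable_apply_iterate {f : X → X} {h : X → ℕ} (hh : Measurable h)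
    (hf : Measurable f) : Measurable fun x => f^[h x] x := by
  intro B hB
  have heq : (fun x => f^[h x] x) ⁻¹' B = ⋃ k : ℕ, (h ⁻¹' {k}) ∩ (f^[k] ⁻¹' B) := by
    ext x
    simp only [Set.mem_preimage, Set.mem_iUnion, Set.mem_inter_iff, Set.mem_singleton_iff]
    constructor
    · intro hx; exact ⟨h x, rfl, hx⟩
    · rintro ⟨k, rfl, hx⟩; exact hx
  rw [heq]
  exact MeasurableSet.iUnion fun k => (hh (MeasurableSet.singleton k)).inter ((hf.iterate k) hB)

theorem measurable_inducedMap {f : X → X} {A : Set X} (hf : Measurable f)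
    (hA : MeasurableSet A) : Measurable (inducedMap f A) :=
  measurable_apply_iterate (measurable_toNat_of (measurableSet_hitTime_eq hf hA)) hf

theorem measurableSet_wait_le {f : X → X} {A : Set X} (hf : Measurable f)
    (hA : MeasurableSet A) (i p : ℕ) :
    MeasurableSet {x | wait f A i x ≤ (p : ℕ∞)} := by
  have heq : {x | wait f A i x ≤ (p : ℕ∞)} =
      (inducedMap f A)^[i - 1] ⁻¹' {x | hitTime f A x ≤ (p : ℕ∞)} := rfl
  rw [heq]
  exact ((measurable_inducedMap hf hA).iterate (i - 1)) (measurableSet_hitTime_le hf hA p)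

theorem measurableSet_wait_eq {f : X → X} {A : Set X} (hf : Measurable f)
    (hA : MeasurableSet A) (i : ℕ) (e : ℕ∞) :
    MeasurableSet {x | wait f A i x = e} :=
  measurableSet_eq_of_le (measurableSet_wait_le hf hA i) e

theorem measurableSet_hitIter_eq {f : X → X} {A : Set X} (hf : Measurable f)
    (hA : MeasurableSet A) (κ : ℕ) (e : ℕ∞) :
    MeasurableSet {x | hitIter f A κ x = e} := by
  induction κ generalizing e with
  | zero =>
    have heq : {x | hitIter f A 0 x = e} = if (0 : ℕ∞) = e then Set.univ else ∅ := by
      ext x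
      simp only [hitIter, Finset.range_zero, Finset.sum_empty]
      split <;> simp_all
    rw [heq]
    split <;> simp
  | succ κ ih =>
    have heq : {x | hitIter f A (κ + 1) x = e} =
        ⋃ a : ℕ∞, ⋃ b : ℕ∞, ⋃ _ : a + b = e,
          ({x | hitIter f A κ x = a} ∩ {x | wait f A (κ + 1) x = b}) := by
      ext x
      simp only [Set.mem_setOf_eq, Set.mem_iUnion, Set.mem_inter_iff]
      constructor
      · intro hx
        refine ⟨hitIter f A κ x, wait f A (κ + 1) x, ?_, rfl, rfl⟩
        rw [← hx]
        simp [hitIter, Finset.sum_range_succ]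
      · rintro ⟨a, b, hab, h1, h2⟩
        simp only [hitIter, Finset.sum_range_succ] at *
        rw [h1, h2, hab]
    rw [heq]
    exact MeasurableSet.iUnion fun a => MeasurableSet.iUnion fun b =>
      MeasurableSet.iUnion fun _ => (ih a).inter (measurableSet_wait_eq hf hA (κ + 1) b)

theorem measurableSet_Uset {φ : X → ℝ} (hφ : Measurable φ) (u : ℝ) :
    MeasurableSet (Uset φ u) :=
  hφ measurableSet_Ioi

theorem measurableSet_Upk {f : X → X} {φ : X → ℝ} (hf : Measurable f) (hφ : Measurable φ)
    (p : ℕ) (u : ℝ) (κ : ℕ) : MeasurableSet (Upk f φ p u κ) :=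
  (measurableSet_Uset hφ u).inter (MeasurableSet.biInter (Finset.countable_toSet _)
    fun i _ => measurableSet_wait_le hf (measurableSet_Uset hφ u) i p)

theorem measurableSet_UpInf {f : X → X} {φ : X → ℝ} (hf : Measurable f) (hφ : Measurable φ)
    (p : ℕ) (u : ℝ) : MeasurableSet (UpInf f φ p u) :=
  MeasurableSet.iInter fun κ => measurableSet_Upk hf hφ p u κ

theorem measurableSet_Qk {f : X → X} {φ : X → ℝ} (hf : Measurable f) (hφ : Measurable φ)
    (p : ℕ) (u : ℝ) (κ : ℕ) : MeasurableSet (Qk f φ p u κ) := by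
  have heq : {x | (p : ℕ∞) < wait f (Uset φ u) (κ + 1) x} =
      {x | wait f (Uset φ u) (κ + 1) x ≤ (p : ℕ∞)}ᶜ := by
    ext x; simp [not_le]
  exact (measurableSet_Upk hf hφ p u κ).inter
    (heq ▸ (measurableSet_wait_le hf (measurableSet_Uset hφ u) (κ + 1) p).compl)

theorem measurableSet_excess {f : X → X} {φ : X → ℝ} (hf : Measurable f) (hφ : Measurable φ)
    (u t : ℝ) (κ : ℕ) : MeasurableSet {x | t < excessSum f φ u κ x} := by
  have heq : {x | t < excessSum f φ u κ x} =
      ⋃ k : ℕ, ({x | (hitIter f (Uset φ u) κ x).toNat = k} ∩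
        {x | t < ∑ j ∈ Finset.range (k + 1), max (φ (f^[j] x) - u) 0}) := by
    ext x
    simp only [Set.mem_setOf_eq, Set.mem_iUnion, Set.mem_inter_iff]
    constructor
    · intro hx
      exact ⟨(hitIter f (Uset φ u) κ x).toNat, rfl, hx⟩
    · rintro ⟨k, hk, hx⟩
      unfold excessSum
      rw [hk]
      exact hx
  rw [heq]
  refine MeasurableSet.iUnion fun k => MeasurableSet.inter ?_ ?_
  · have := measurable_toNat_of (measurableSet_hitIter_eq hf (measurableSet_Uset hφ u) κ)
    exact this (MeasurableSet.singleton k)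
  · have hg : Measurable fun x => ∑ j ∈ Finset.range (k + 1), max (φ (f^[j] x) - u) 0 := by
      apply Finset.measurable_sum
      intro j _
      exact ((hφ.comp (hf.iterate j)).sub measurable_const).max measurable_const
    exact measurableSet_lt measurable_const hg

theorem measurableSet_U0 {f : X → X} {φ : X → ℝ} (hf : Measurable f) (hφ : Measurable φ)
    (p : ℕ) (u t : ℝ) : MeasurableSet (U0 f φ p u t) := by
  refine MeasurableSet.union (MeasurableSet.iUnion fun κ => ?_) (measurableSet_UpInf hf hφ p u)
  exact (measurableSet_Qk hf hφ p u κ).inter (measurableSet_excess hf hφ u t κ)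

end Aux

/-- Lemma comparing avoidance of `U_{p,0}(u,x)` with avoidance of `R_{p,0}(u,x)`. -/
theorem statement0 {X : Type*} [MeasurableSpace X] (μ : Measure X) [IsProbabilityMeasure μ]
    (f : X → X) (φ : X → ℝ) (hf : MeasurePreserving f μ μ) (hφ : Measurable φ)
    (p s : ℕ) (hs : 1 ≤ s) (t : ℝ) (ht : 0 ≤ t) (u : ℝ) :
    |(μ (⋂ i ∈ Finset.range s, f^[i] ⁻¹' (U0 f φ p u t)ᶜ)).toReal -
        (μ (⋂ i ∈ Finset.range s, f^[i] ⁻¹' (R0 f φ p u t)ᶜ)).toReal| ≤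
      (p : ℝ) * (μ (U0 f φ p u t)).toReal := by
  classical
  have hfm : Measurable f := hf.measurable
  set V := U0 f φ p u t with hV
  have hVm : MeasurableSet V := measurableSet_U0 hfm hφ p u t
  set A := ⋂ i ∈ Finset.range s, f^[i] ⁻¹' Vᶜ with hA
  set B := ⋂ i ∈ Finset.range s, f^[i] ⁻¹' (R0 f φ p u t)ᶜ with hB
  have hAB : A ⊆ B := by
    refine Set.iInter₂_mono fun i _ => Set.preimage_mono (Set.compl_subset_compl.2 ?_)
    exact Set.inter_subset_left
  have key : B ⊆ A ∪ ⋃ i ∈ Finset.Ico (s - p) s, f^[i] ⁻¹' V := by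
    intro x hx
    by_cases hxA : x ∈ A
    · exact Or.inl hxA
    right
    have hxU : ∃ i, i < s ∧ f^[i] x ∈ V := by
      by_contra hc
      push_neg at hc
      exact hxA (Set.mem_iInter₂.2 fun i hi => hc i (Finset.mem_range.1 hi))
    obtain ⟨i0, hi0s, hi0V⟩ := hxU
    set S := (Finset.range s).filter (fun i => f^[i] x ∈ V) with hS
    have hSne : S.Nonempty := ⟨i0, Finset.mem_filter.2 ⟨Finset.mem_range.2 hi0s, hi0V⟩⟩
    set i := S.max' hSne with hi
    have hiS : i ∈ S := S.max'_mem hSne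
    have his : i < s := Finset.mem_range.1 (Finset.mem_filter.1 hiS).1
    have hiV : f^[i] x ∈ V := (Finset.mem_filter.1 hiS).2
    have hxR : f^[i] x ∉ R0 f φ p u t :=
      Set.mem_iInter₂.1 hx i (Finset.mem_range.2 his)
    have hht : hitTime f V (f^[i] x) ≤ (p : ℕ∞) := by
      by_contra hgt
      exact hxR ⟨hiV, not_le.1 hgt⟩
    obtain ⟨j, hj1, hjp, hjV⟩ := hitTime_le_iff.1 hht
    have hjiV : f^[j + i] x ∈ V := by
      rw [Function.iterate_add_apply]; exact hjV
    have hges : s ≤ j + i := by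
      by_contra hlt
      push_neg at hlt
      have hmem : j + i ∈ S := Finset.mem_filter.2 ⟨Finset.mem_range.2 hlt, hjiV⟩
      have := S.le_max' _ hmem
      omega
    exact Set.mem_iUnion₂.2 ⟨i, Finset.mem_Ico.2 ⟨by omega, his⟩, hiV⟩
  have hmeas : ∀ i : ℕ, μ (f^[i] ⁻¹' V) = μ V := fun i =>
    (hf.iterate i).measure_preimage hVm.nullMeasurableSet
  have hU : μ (⋃ i ∈ Finset.Ico (s - p) s, f^[i] ⁻¹' V) ≤ (p : ENNReal) * μ V := by
    calc μ (⋃ i ∈ Finset.Ico (s - p) s, f^[i] ⁻¹' V)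
        ≤ ∑ i ∈ Finset.Ico (s - p) s, μ (f^[i] ⁻¹' V) := measure_biUnion_finset_le _ _
      _ = ∑ i ∈ Finset.Ico (s - p) s, μ V := Finset.sum_congr rfl fun i _ => hmeas i
      _ = ((s - (s - p) : ℕ) : ENNReal) * μ V := by
          rw [Finset.sum_const, Nat.card_Ico, nsmul_eq_mul]
      _ ≤ (p : ENNReal) * μ V := by
          refine mul_le_mul_left ?_ _
          exact_mod_cast Nat.cast_le.2 (by omega : s - (s - p) ≤ p)
  have hmB : μ B ≤ μ A + (p : ENNReal) * μ V :=
    calc μ B ≤ μ (A ∪ ⋃ i ∈ Finset.Ico (s - p) s, f^[i] ⁻¹' V) := measure_mono key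
      _ ≤ μ A + μ (⋃ i ∈ Finset.Ico (s - p) s, f^[i] ⁻¹' V) := measure_union_le _ _
      _ ≤ μ A + (p : ENNReal) * μ V := add_le_add_right hU _
  have hABμ : μ A ≤ μ B := measure_mono hAB
  have hAfin : μ A ≠ ⊤ := measure_ne_top μ A
  have hBfin : μ B ≠ ⊤ := measure_ne_top μ B
  have hVfin : (p : ENNReal) * μ V ≠ ⊤ :=
    ENNReal.mul_ne_top (by simp) (measure_ne_top μ V)
  have htR : (μ A).toReal ≤ (μ B).toReal := ENNReal.toReal_mono hBfin hABμ
  rw [abs_sub_comm, abs_of_nonneg (sub_nonneg.2 htR)]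
  have hBle : (μ B).toReal ≤ (μ A).toReal + (p : ℝ) * (μ V).toReal := by
    have := ENNReal.toReal_mono (by exact ENNReal.add_ne_top.2 ⟨hAfin, hVfin⟩) hmB
    rwa [ENNReal.toReal_add hAfin hVfin, ENNReal.toReal_mul, ENNReal.toReal_natCast] at this
  linarith


end Paper
end
end

section
/- Let u ∈ ℝ, let s ≥ 1 be an integer, let x ≥ 0, and set 𝒜 := Σ_{i=0}^{s−1} (X_i − u)_+ (the sum of all excesses over u during times 0, …, s−1) and V := {X₀ > u} ∩ {(X₀ − u)_+ > x}. Then | ℙ( 𝒜 ≤ x ) − ℙ( ⋂_{i=0}^{s−1} f^{-i}( Vᶜ ) ) | ≤ s · Σ_{j=1}^{s−1} ℙ( {X₀ > u} ∩ f^{-j}({X₀ > u}) ). -/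
open MeasureTheory Set Filter

lemma aux_two_pos (g : ℕ → ℝ) (hgnn : ∀ i, 0 ≤ g i)
    (s : ℕ) (t : ℝ) (ht : 0 ≤ t)
    (hB : ∀ i < s, g i ≤ t) (hA : t < ∑ i ∈ Finset.range s, g i) :
    ∃ i j, i < j ∧ j < s ∧ 0 < g i ∧ 0 < g j := by
  set S := (Finset.range s).filter (fun i => g i ≠ 0) with hS
  have hsum : ∑ i ∈ S, g i = ∑ i ∈ Finset.range s, g i := Finset.sum_filter_ne_zero _
  rcases lt_or_ge S.card 2 with hc | hc
  · exfalso
    have h1 : ∑ i ∈ S, g i ≤ S.card • t :=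
      Finset.sum_le_card_nsmul S g t
        (fun i hi => hB i (Finset.mem_range.mp (Finset.mem_filter.mp hi).1))
    have h2 : (S.card : ℝ) * t ≤ t := by
      have : (S.card : ℝ) ≤ 1 := by exact_mod_cast Nat.lt_succ_iff.mp hc
      nlinarith
    rw [nsmul_eq_mul] at h1
    linarith [hsum ▸ h1]
  · obtain ⟨a, ha, b, hb, hab⟩ := Finset.one_lt_card.mp hc
    have hpa : 0 < g a := (hgnn a).lt_of_ne (Ne.symm (Finset.mem_filter.mp ha).2)
    have hpb : 0 < g b := (hgnn b).lt_of_ne (Ne.symm (Finset.mem_filter.mp hb).2)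
    have hra : a < s := Finset.mem_range.mp (Finset.mem_filter.mp ha).1
    have hrb : b < s := Finset.mem_range.mp (Finset.mem_filter.mp hb).1
    rcases lt_or_gt_of_ne hab with h | h
    · exact ⟨a, b, h, hrb, hpa, hpb⟩
    · exact ⟨b, a, h, hra, hpb, hpa⟩

/-- Statement 2 (`p = 0` case: comparing the distribution of the accumulated excesses
`𝒜 = Σ_{i=0}^{s−1} (X_i − u)_+` with the probability of avoiding
`V = {X₀ > u} ∩ {(X₀ − u)_+ > x}` during `[0,s)`). -/
theorem statement2 {X : Type*} [MeasurableSpace X] (μ : Measure X) [IsProbabilityMeasure μ]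
    (f : X → X) (φ : X → ℝ) (hf : MeasurePreserving f μ μ) (hφ : Measurable φ)
    (u : ℝ) (s : ℕ) (hs : 1 ≤ s) (t : ℝ) (ht : 0 ≤ t) :
    |(μ {z | ∑ i ∈ Finset.range s, max (φ (f^[i] z) - u) 0 ≤ t}).toReal -
        (μ (⋂ i ∈ Finset.range s,
          f^[i] ⁻¹' ({z | u < φ z} ∩ {z | t < max (φ z - u) 0})ᶜ)).toReal| ≤
      (s : ℝ) * ∑ j ∈ Finset.Ico 1 s,
        (μ ({z | u < φ z} ∩ f^[j] ⁻¹' {z | u < φ z})).toReal := by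
  have hfm : ∀ i : ℕ, Measurable (f^[i]) := fun i => hf.measurable.iterate i
  set g : ℕ → X → ℝ := fun i z => max (φ (f^[i] z) - u) 0 with hg
  have hgm : ∀ i, Measurable (g i) :=
    fun i => ((hφ.comp (hfm i)).sub measurable_const).max measurable_const
  have hgnn : ∀ i z, 0 ≤ g i z := fun i z => le_max_right _ _
  set A := {z | ∑ i ∈ Finset.range s, g i z ≤ t} with hA
  set B := {z : X | ∀ i < s, g i z ≤ t} with hB
  have hAm : MeasurableSet A :=
    measurableSet_le (Finset.measurable_sum _ (fun i _ => hgm i)) measurable_const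
  have hBm : MeasurableSet B := by
    have : B = ⋂ i ∈ Finset.range s, {z | g i z ≤ t} := by
      ext z; simp [hB, mem_iInter]
    rw [this]
    exact Finset.measurableSet_biInter _ (fun i _ => measurableSet_le (hgm i) measurable_const)
  have hBeq : (⋂ i ∈ Finset.range s,
      f^[i] ⁻¹' ({z | u < φ z} ∩ {z | t < max (φ z - u) 0})ᶜ) = B := by
    ext z
    simp only [hB, mem_iInter, Finset.mem_range, mem_preimage, mem_compl_iff, mem_inter_iff,
      mem_setOf_eq, hg, not_and, not_lt]
    refine forall_congr' fun i => imp_congr Iff.rfl ?_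
    constructor
    · intro h
      by_cases hu : u < φ (f^[i] z)
      · exact h hu
      · rw [max_eq_right (sub_nonpos.mpr (not_lt.mp hu))]; exact ht
    · intro h _; exact h
  have hAB : A ⊆ B := by
    intro z hz i hi
    calc g i z ≤ ∑ j ∈ Finset.range s, g j z :=
          Finset.single_le_sum (fun j _ => hgnn j z) (Finset.mem_range.mpr hi)
      _ ≤ t := hz
  set C : ℕ → Set X := fun k => {z | u < φ z} ∩ f^[k] ⁻¹' {z | u < φ z} with hC
  have hCm : ∀ k, MeasurableSet (C k) :=
    fun k => (measurableSet_lt measurable_const hφ).inter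
      ((hfm k) (measurableSet_lt measurable_const hφ))
  -- cover
  have hcover : B \ A ⊆ ⋃ k ∈ Finset.Ico 1 s, ⋃ i ∈ Finset.range s, f^[i] ⁻¹' (C k) := by
    rintro z ⟨hzB, hzA⟩
    have hA' : t < ∑ i ∈ Finset.range s, g i z := not_le.mp hzA
    obtain ⟨i, j, hij, hjs, hpi, hpj⟩ := aux_two_pos (fun i => g i z) (fun i => hgnn i z)
      s t ht hzB hA'
    have hki : (j - i) + i = j := Nat.sub_add_cancel hij.le
    have hui : u < φ (f^[i] z) := by
      by_contra hu
      have : g i z = 0 := max_eq_right (sub_nonpos.mpr (not_lt.mp hu))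
      exact absurd this hpi.ne'
    have huj : u < φ (f^[j] z) := by
      by_contra hu
      have : g j z = 0 := max_eq_right (sub_nonpos.mpr (not_lt.mp hu))
      exact absurd this hpj.ne'
    simp only [mem_iUnion, Finset.mem_Ico, Finset.mem_range]
    refine ⟨j - i, ⟨Nat.le_sub_of_add_le (by omega), by omega⟩, i, by omega, hui, ?_⟩
    show u < φ (f^[j-i] (f^[i] z))
    rw [← Function.iterate_add_apply, hki]
    exact huj
  -- measure of each piece
  have hpull : ∀ k i : ℕ, μ (f^[i] ⁻¹' (C k)) = μ (C k) := by
    intro k i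
    exact (hf.iterate i).measure_preimage (hCm k).nullMeasurableSet
  have hfin : ∀ S : Set X, μ S ≠ ⊤ := fun S => (measure_lt_top μ S).ne
  have hdiff : μ (B \ A) = μ B - μ A := measure_diff hAB hAm.nullMeasurableSet (hfin A)
  have hle : μ A ≤ μ B := measure_mono hAB
  have habs : |(μ A).toReal - (μ B).toReal| = (μ (B \ A)).toReal := by
    rw [abs_sub_comm, hdiff, ENNReal.toReal_sub_of_le hle (hfin B),
      abs_of_nonneg (sub_nonneg.mpr (ENNReal.toReal_mono (hfin B) hle))]
  rw [hBeq, habs]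
  have hmono : μ (B \ A) ≤ ∑ k ∈ Finset.Ico 1 s, ∑ i ∈ Finset.range s, μ (f^[i] ⁻¹' (C k)) := by
    refine (measure_mono hcover).trans ?_
    refine (measure_biUnion_finset_le _ _).trans ?_
    exact Finset.sum_le_sum fun k _ => measure_biUnion_finset_le _ _
  have hmono' : (μ (B \ A)).toReal ≤
      (∑ k ∈ Finset.Ico 1 s, ∑ i ∈ Finset.range s, μ (f^[i] ⁻¹' (C k))).toReal := by
    refine ENNReal.toReal_mono ?_ hmono
    refine (ENNReal.sum_ne_top).mpr fun k _ => (ENNReal.sum_ne_top).mpr fun i _ => hfin _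
  refine hmono'.trans ?_
  rw [ENNReal.toReal_sum (fun k _ => (ENNReal.sum_ne_top).mpr fun i _ => hfin _)]
  rw [Finset.mul_sum]
  refine Finset.sum_le_sum fun k _ => le_of_eq ?_
  rw [ENNReal.toReal_sum (fun i _ => hfin _)]
  calc ∑ i ∈ Finset.range s, (μ (f^[i] ⁻¹' (C k))).toReal
      = ∑ i ∈ Finset.range s, (μ (C k)).toReal := by
        refine Finset.sum_congr rfl fun i _ => by rw [hpull]
    _ = (s : ℝ) * (μ (C k)).toReal := by
        rw [Finset.sum_const, Finset.card_range, nsmul_eq_mul]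
    _ = (s : ℝ) * (μ ({z | u < φ z} ∩ f^[k] ⁻¹' {z | u < φ z})).toReal := rfl
end

section
/- Let p ∈ ℕ₀ and let (u_n)_{n≥1} be a sequence of reals such that n·ℙ(X₀ > u_n) → τ for some τ ∈ [0,∞). Set U_n := {X₀ > u_n} and Q_n := U_n ∩ ⋂_{i=1}^{p} f^{-i}( U_nᶜ ). Assume: (i) there exist C ≥ 0 and ρ : ℕ → [0,∞) with Σ_{j≥1} ρ_j < ∞ such that ℙ( Q_n ∩ f^{-j}( U_n ) ) ≤ ℙ(U_n) ( ℙ(Q_n) + C ρ_j ) for all n ≥ 1 and j ≥ 1; (ii) there is a sequence (R_n) of natural numbers with R_n → ∞ such that ℙ( Q_n ∩ f^{-j}( U_n ) ) = 0 whenever p+1 ≤ j < R_n; (iii) (k_n) is a sequence of natural numbers with k_n → ∞. Then n · Σ_{j=p+1}^{⌊n/k_n⌋ − 1} ℙ( Q_n ∩ f^{-j}( U_n ) ) → 0 as n → ∞. -/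
open MeasureTheory Set Filter

/-- `U_n = {X₀ > u_n}`. -/
def Un {X : Type*} (φ : X → ℝ) (u : ℕ → ℝ) (n : ℕ) : Set X := {x | u n < φ x}

/-- `Q_n = U_n ∩ ⋂_{i=1}^{p} f^{-i}(U_nᶜ)`. -/
def Qn {X : Type*} (f : X → X) (φ : X → ℝ) (p : ℕ) (u : ℕ → ℝ) (n : ℕ) : Set X :=
  Un φ u n ∩ ⋂ i ∈ Finset.Icc 1 p, f^[i] ⁻¹' (Un φ u n)ᶜ

/-- condition `D′_p(u_n)*` follows from summable decay of correlations against
`L¹` and divergence of the first return time of `Q_n` to `U_n`. -/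
theorem statement6 {X : Type*} [MeasurableSpace X] (μ : Measure X) [IsProbabilityMeasure μ]
    (f : X → X) (φ : X → ℝ) (hf : MeasurePreserving f μ μ) (hφ : Measurable φ)
    (p : ℕ) (u : ℕ → ℝ) (τ : ℝ) (hτ : 0 ≤ τ)
    (hun : Tendsto (fun n : ℕ => (n : ℝ) * (μ (Un φ u n)).toReal) atTop (nhds τ))
    (C : ℝ) (hC : 0 ≤ C) (ρ : ℕ → ℝ) (hρ0 : ∀ j, 0 ≤ ρ j) (hρ : Summable ρ)
    (hcor : ∀ n, 1 ≤ n → ∀ j, 1 ≤ j →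
      (μ (Qn f φ p u n ∩ f^[j] ⁻¹' Un φ u n)).toReal ≤
        (μ (Un φ u n)).toReal * ((μ (Qn f φ p u n)).toReal + C * ρ j))
    (R : ℕ → ℕ) (hR : Tendsto R atTop atTop)
    (hzero : ∀ n j, p + 1 ≤ j → j < R n → μ (Qn f φ p u n ∩ f^[j] ⁻¹' Un φ u n) = 0)
    (k : ℕ → ℕ) (hk : Tendsto k atTop atTop) :
    Tendsto (fun n : ℕ => (n : ℝ) * ∑ j ∈ Finset.Ico (p + 1) (n / k n),
      (μ (Qn f φ p u n ∩ f^[j] ⁻¹' Un φ u n)).toReal) atTop (nhds 0) := by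
  set a : ℕ → ℝ := fun n => (n : ℝ) * (μ (Un φ u n)).toReal with ha
  set tail : ℕ → ℝ := fun n => ∑' i, ρ (i + R n) with htail
  have htail0 : Tendsto tail atTop (nhds 0) := (tendsto_sum_nat_add ρ).comp hR
  have hk0 : Tendsto (fun n => ((k n : ℝ))⁻¹) atTop (nhds 0) :=
    tendsto_inv_atTop_zero.comp (tendsto_natCast_atTop_atTop.comp hk)
  have hak : Tendsto (fun n => a n / k n) atTop (nhds 0) := by
    simpa [div_eq_mul_inv] using hun.mul hk0
  have hg : Tendsto (fun n => a n * (a n / k n + C * tail n)) atTop (nhds 0) := by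
    have := hun.mul (hak.add ((tendsto_const_nhds (x := C)).mul htail0))
    simpa using this
  refine squeeze_zero' ?_ ?_ hg
  · filter_upwards with n
    exact mul_nonneg (Nat.cast_nonneg n)
      (Finset.sum_nonneg fun j _ => ENNReal.toReal_nonneg)
  · filter_upwards [eventually_ge_atTop 1] with n hn
    set m := n / k n with hm
    set M := max (p + 1) (R n) with hM
    set Uv := (μ (Un φ u n)).toReal with hUv
    set Qv := (μ (Qn f φ p u n)).toReal with hQv
    have hUv0 : 0 ≤ Uv := ENNReal.toReal_nonneg
    have hQv0 : 0 ≤ Qv := ENNReal.toReal_nonneg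
    have hQU : Qv ≤ Uv :=
      ENNReal.toReal_mono (measure_ne_top μ _) (measure_mono Set.inter_subset_left)
    have h1 : ∑ j ∈ Finset.Ico (p + 1) m,
        (μ (Qn f φ p u n ∩ f^[j] ⁻¹' Un φ u n)).toReal
        = ∑ j ∈ Finset.Ico M m, (μ (Qn f φ p u n ∩ f^[j] ⁻¹' Un φ u n)).toReal := by
      refine (Finset.sum_subset (Finset.Ico_subset_Ico (le_max_left _ _) le_rfl) ?_).symm
      intro j hj hj'
      simp only [Finset.mem_Ico] at hj hj'
      have hjR : j < R n := by
        have : j < M := by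
          by_contra h
          exact hj' ⟨not_lt.mp h, hj.2⟩
        rcases lt_max_iff.mp this with h | h
        · omega
        · exact h
      rw [hzero n j hj.1 hjR]
      simp
    have h2 : ∑ j ∈ Finset.Ico M m, (μ (Qn f φ p u n ∩ f^[j] ⁻¹' Un φ u n)).toReal
        ≤ ∑ j ∈ Finset.Ico M m, Uv * (Qv + C * ρ j) := by
      refine Finset.sum_le_sum fun j hj => ?_
      have hj1 : 1 ≤ j := by
        have := (Finset.mem_Ico.mp hj).1
        omega
      exact hcor n hn j hj1
    have h3 : ∑ j ∈ Finset.Ico M m, Uv * (Qv + C * ρ j)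
        = Uv * (((Finset.Ico M m).card : ℝ) * Qv + C * ∑ j ∈ Finset.Ico M m, ρ j) := by
      rw [← Finset.mul_sum, Finset.sum_add_distrib, Finset.sum_const, nsmul_eq_mul,
        ← Finset.mul_sum]
    have hcard : ((Finset.Ico M m).card : ℝ) ≤ (m : ℝ) := by
      rw [Nat.card_Ico]
      exact_mod_cast Nat.sub_le m M
    have hmr : (m : ℝ) ≤ (n : ℝ) / (k n : ℝ) := Nat.cast_div_le
    have hsumρ : ∑ j ∈ Finset.Ico M m, ρ j ≤ tail n := by
      calc ∑ j ∈ Finset.Ico M m, ρ j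
          ≤ ∑ j ∈ Finset.Ico (R n) (max m M), ρ j := by
            refine Finset.sum_le_sum_of_subset_of_nonneg ?_ (fun j _ _ => hρ0 j)
            exact Finset.Ico_subset_Ico (le_max_right _ _) (le_max_left _ _)
        _ = ∑ i ∈ Finset.range (max m M - R n), ρ (i + R n) := by
            rw [Finset.sum_Ico_eq_sum_range]
            exact Finset.sum_congr rfl fun i _ => by rw [add_comm]
        _ ≤ tail n :=
            Summable.sum_le_tsum _ (fun i _ => hρ0 _) ((summable_nat_add_iff (R n)).mpr hρ)
    have hsumρ0 : 0 ≤ ∑ j ∈ Finset.Ico M m, ρ j := Finset.sum_nonneg fun j _ => hρ0 j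
    have htail0' : 0 ≤ tail n := le_trans hsumρ0 hsumρ
    calc (n : ℝ) * ∑ j ∈ Finset.Ico (p + 1) m,
          (μ (Qn f φ p u n ∩ f^[j] ⁻¹' Un φ u n)).toReal
        ≤ (n : ℝ) * ∑ j ∈ Finset.Ico M m, Uv * (Qv + C * ρ j) := by
          rw [h1]
          exact mul_le_mul_of_nonneg_left h2 (Nat.cast_nonneg n)
      _ = a n * (((Finset.Ico M m).card : ℝ) * Qv + C * ∑ j ∈ Finset.Ico M m, ρ j) := by
          rw [h3, ha]; ring
      _ ≤ a n * (a n / k n + C * tail n) := by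
          refine mul_le_mul_of_nonneg_left ?_ (mul_nonneg (Nat.cast_nonneg n) hUv0)
          refine add_le_add ?_ (mul_le_mul_of_nonneg_left hsumρ hC)
          calc ((Finset.Ico M m).card : ℝ) * Qv
              ≤ ((n : ℝ) / (k n : ℝ)) * Uv :=
                mul_le_mul (hcard.trans hmr) hQU hQv0
                  (div_nonneg (Nat.cast_nonneg n) (Nat.cast_nonneg _))
            _ = a n / k n := by rw [ha]; ring
end

section
/- Let δ > 0 and let g : (0,δ) → ℝ be continuous and strictly decreasing, with L := lim_{t→0⁺} g(t) ∈ ℝ ∪ {+∞} and inverse g⁻¹ defined on the image of g. Suppose there is a function q with values in (0,∞) such that for every y ∈ ℝ, g⁻¹(s + y q(s)) is defined for all s in the domain sufficiently close to L and lim_{s→L⁻} g⁻¹(s + y q(s)) / g⁻¹(s) = e^{−y}. Then for every x > 0, lim_{u→L⁻} ( g( x · g⁻¹(u) ) − u ) / q(u) = − log x. -/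
open Set Filter Topology

/-- The filter of real numbers approaching `L ∈ ℝ ∪ {+∞}` from below
(`atTop` when `L = ⊤`, `𝓝[<] L` when `L` is real). -/
noncomputable def lbelow (L : EReal) : Filter ℝ :=
  Filter.comap (fun x : ℝ => (x : EReal)) (nhdsWithin L (Iio L))

/-- Type 1 observables: if `g⁻¹(s + y q(s))/g⁻¹(s) → e^{−y}` as `s → L⁻`
for every `y`, then `(g(x·g⁻¹(u)) − u)/q(u) → −log x` as `u → L⁻`, for every `x > 0`. -/
theorem statement10 (δ : ℝ) (hδ : 0 < δ) (g ginv : ℝ → ℝ)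
    (hgc : ContinuousOn g (Ioo 0 δ)) (hga : StrictAntiOn g (Ioo 0 δ))
    (L : EReal) (hL : Tendsto (fun t => (g t : EReal)) (nhdsWithin 0 (Ioi 0)) (nhds L))
    (hginv : ∀ t ∈ Ioo 0 δ, ginv (g t) = t)
    (q : ℝ → ℝ) (hq : ∀ s ∈ g '' Ioo 0 δ, 0 < q s)
    (hlim : ∀ y : ℝ,
      (∀ᶠ s in lbelow L, s + y * q s ∈ g '' Ioo 0 δ) ∧
        Tendsto (fun s => ginv (s + y * q s) / ginv s) (lbelow L) (nhds (Real.exp (-y)))) :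
    ∀ x : ℝ, 0 < x →
      Tendsto (fun u => (g (x * ginv u) - u) / q u) (lbelow L) (nhds (-Real.log x)) := by
  intro x hx
  set y₀ := -Real.log x with hy₀
  have hxexp : Real.exp (-y₀) = x := by simp [hy₀, Real.exp_log hx]
  have hmem : ∀ᶠ u in lbelow L, u ∈ g '' Ioo 0 δ := by
    have := (hlim 0).1; simpa using this
  rw [tendsto_order]
  constructor
  · intro b hb
    have hb' : x < Real.exp (-b) := by
      rw [← hxexp]; exact Real.exp_lt_exp.2 (by linarith)
    filter_upwards [hmem, (hlim b).1,
      (hlim b).2.eventually (eventually_gt_nhds hb')] with u hu h1 h2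
    obtain ⟨t, ht, hgt⟩ := hu
    have hginvu : ginv u ∈ Ioo 0 δ := by rw [← hgt, hginv t ht]; exact ht
    obtain ⟨t', ht', hgt'⟩ := h1
    have hgi1 : ginv (u + b * q u) = t' := by rw [← hgt', hginv t' ht']
    have hginv1 : ginv (u + b * q u) ∈ Ioo 0 δ := by rw [hgi1]; exact ht'
    have hqu : 0 < q u := hq u ⟨t, ht, hgt⟩
    have hlt : x * ginv u < ginv (u + b * q u) := by
      rw [lt_div_iff₀ hginvu.1] at h2; linarith
    have hxmem : x * ginv u ∈ Ioo 0 δ :=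
      ⟨mul_pos hx hginvu.1, lt_trans hlt hginv1.2⟩
    have hgg : g (ginv (u + b * q u)) = u + b * q u := by rw [hgi1, hgt']
    have := hga hxmem hginv1 hlt
    rw [hgg] at this
    rw [lt_div_iff₀ hqu]; linarith
  · intro b hb
    have hb' : Real.exp (-b) < x := by
      rw [← hxexp]; exact Real.exp_lt_exp.2 (by linarith)
    have hb'' : x < Real.exp (-(y₀ - 1)) := by
      rw [← hxexp]; exact Real.exp_lt_exp.2 (by linarith)
    filter_upwards [hmem, (hlim b).1,
      (hlim b).2.eventually (eventually_lt_nhds hb'), (hlim (y₀ - 1)).1,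
      (hlim (y₀ - 1)).2.eventually (eventually_gt_nhds hb'')] with u hu h1 h2 h3 h4
    obtain ⟨t, ht, hgt⟩ := hu
    have hginvu : ginv u ∈ Ioo 0 δ := by rw [← hgt, hginv t ht]; exact ht
    obtain ⟨t', ht', hgt'⟩ := h1
    have hgi1 : ginv (u + b * q u) = t' := by rw [← hgt', hginv t' ht']
    have hginv1 : ginv (u + b * q u) ∈ Ioo 0 δ := by rw [hgi1]; exact ht'
    obtain ⟨t'', ht'', hgt''⟩ := h3
    have hgi2 : ginv (u + (y₀ - 1) * q u) = t'' := by rw [← hgt'', hginv t'' ht'']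
    have hginv2 : ginv (u + (y₀ - 1) * q u) ∈ Ioo 0 δ := by rw [hgi2]; exact ht''
    have hqu : 0 < q u := hq u ⟨t, ht, hgt⟩
    have hlt : ginv (u + b * q u) < x * ginv u := by
      rw [div_lt_iff₀ hginvu.1] at h2; linarith
    have hlt2 : x * ginv u < ginv (u + (y₀ - 1) * q u) := by
      rw [lt_div_iff₀ hginvu.1] at h4; linarith
    have hxmem : x * ginv u ∈ Ioo 0 δ :=
      ⟨mul_pos hx hginvu.1, lt_trans hlt2 hginv2.2⟩
    have hgg : g (ginv (u + b * q u)) = u + b * q u := by rw [hgi1, hgt']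
    have := hga hginv1 hxmem hlt
    rw [hgg] at this
    rw [div_lt_iff₀ hqu]; linarith
end

section
/- Let δ > 0 and let g : (0,δ) → ℝ be continuous and strictly decreasing with lim_{t→0⁺} g(t) = +∞, with inverse g⁻¹ defined on the image of g. Let β > 0 and suppose that for every y > 0, lim_{s→∞} g⁻¹(s y) / g⁻¹(s) = y^{−β}. Then for every x > 0, lim_{u→∞} ( g( x · g⁻¹(u) ) − u ) / u = x^{−1/β} − 1. -/
open Set Filter Topology

/-- Type 2 observables: if `g(t) → +∞` as `t → 0⁺` and
`g⁻¹(sy)/g⁻¹(s) → y^{−β}` as `s → ∞` for every `y > 0`, then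
`(g(x·g⁻¹(u)) − u)/u → x^{−1/β} − 1` as `u → ∞`, for every `x > 0`. -/
theorem statement11 (δ : ℝ) (hδ : 0 < δ) (g ginv : ℝ → ℝ)
    (hgc : ContinuousOn g (Ioo 0 δ)) (hga : StrictAntiOn g (Ioo 0 δ))
    (hL : Tendsto g (nhdsWithin 0 (Ioi 0)) atTop)
    (hginv : ∀ t ∈ Ioo 0 δ, ginv (g t) = t)
    (β : ℝ) (hβ : 0 < β)
    (hlim : ∀ y : ℝ, 0 < y →
      Tendsto (fun s => ginv (s * y) / ginv s) atTop (nhds (y ^ (-β)))) :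
    ∀ x : ℝ, 0 < x →
      Tendsto (fun u => (g (x * ginv u) - u) / u) atTop (nhds (x ^ (-1 / β) - 1)) := by
  intro x hx
  set y₀ : ℝ := x ^ (-1 / β) with hy₀def
  have hy₀pos : 0 < y₀ := Real.rpow_pos_of_pos hx _
  have hxy₀ : y₀ ^ (-β) = x := by
    rw [hy₀def, ← Real.rpow_mul hx.le]
    rw [show (-1 / β) * (-β) = 1 by field_simp]
    exact Real.rpow_one x
  -- eventually, ginv s is a genuine inverse
  have hP : ∀ᶠ s in atTop, ginv s ∈ Ioo 0 δ ∧ g (ginv s) = s := by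
    have ht₀ : δ / 2 ∈ Ioo 0 δ := ⟨by positivity, by linarith⟩
    filter_upwards [eventually_ge_atTop (g (δ / 2))] with s hs
    have h1 : ∀ᶠ t in 𝓝[>] (0 : ℝ), s ≤ g t := hL.eventually (eventually_ge_atTop s)
    have h2 : Ioo (0 : ℝ) (δ / 2) ∈ 𝓝[>] (0 : ℝ) :=
      Ioo_mem_nhdsGT_of_mem ⟨le_refl 0, ht₀.1⟩
    obtain ⟨t₁, hst₁, ht₁mem⟩ := (h1.and (eventually_of_mem h2 (fun t ht => ht))).exists
    have hsub : Icc t₁ (δ / 2) ⊆ Ioo 0 δ := fun t ht =>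
      ⟨lt_of_lt_of_le ht₁mem.1 ht.1, lt_of_le_of_lt ht.2 ht₀.2⟩
    have hIVT := intermediate_value_Icc' ht₁mem.2.le (hgc.mono hsub)
    obtain ⟨t, htmem, hgt⟩ := hIVT ⟨hs, hst₁⟩
    have htIoo : t ∈ Ioo 0 δ := hsub htmem
    have hginvs : ginv s = t := by rw [← hgt, hginv t htIoo]
    exact ⟨hginvs ▸ htIoo, by rw [hginvs, hgt]⟩
  -- monotonicity of rpow with negative exponent
  have anti : ∀ a b : ℝ, 0 < a → a < b → b ^ (-β) < a ^ (-β) := by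
    intro a b ha hab
    rw [Real.rpow_neg ha.le, Real.rpow_neg (ha.trans hab).le]
    have h1 : a ^ β < b ^ β := Real.rpow_lt_rpow ha.le hab hβ
    have h2 : (0:ℝ) < a ^ β := Real.rpow_pos_of_pos ha β
    exact inv_strictAnti₀ h2 h1
  -- the key limit
  have key : Tendsto (fun u => g (x * ginv u) / u) atTop (𝓝 y₀) := by
    rw [Metric.tendsto_nhds]
    intro ε hε
    set y₁ : ℝ := y₀ - min (ε / 2) (y₀ / 2) with hy₁def
    set y₂ : ℝ := y₀ + ε / 2 with hy₂def
    have hmin1 : min (ε / 2) (y₀ / 2) ≤ ε / 2 := min_le_left _ _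
    have hmin2 : min (ε / 2) (y₀ / 2) ≤ y₀ / 2 := min_le_right _ _
    have hminpos : 0 < min (ε / 2) (y₀ / 2) := lt_min (by linarith) (by linarith)
    have hy₁pos : 0 < y₁ := by rw [hy₁def]; linarith
    have hy₁lt : y₁ < y₀ := by rw [hy₁def]; linarith
    have hy₂gt : y₀ < y₂ := by rw [hy₂def]; linarith
    have hy₂pos : 0 < y₂ := hy₀pos.trans hy₂gt
    have hx1 : x < y₁ ^ (-β) := by rw [← hxy₀]; exact anti y₁ y₀ hy₁pos hy₁lt
    have hx2 : y₂ ^ (-β) < x := by rw [← hxy₀]; exact anti y₀ y₂ hy₀pos hy₂gt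
    have e1 : ∀ᶠ u in atTop, x < ginv (u * y₁) / ginv u :=
      (hlim y₁ hy₁pos).eventually (eventually_gt_nhds hx1)
    have e2 : ∀ᶠ u in atTop, ginv (u * y₂) / ginv u < x :=
      (hlim y₂ hy₂pos).eventually (eventually_lt_nhds hx2)
    have t1 : Tendsto (fun u : ℝ => u * y₁) atTop atTop :=
      Tendsto.atTop_mul_const hy₁pos tendsto_id
    have t2 : Tendsto (fun u : ℝ => u * y₂) atTop atTop :=
      Tendsto.atTop_mul_const hy₂pos tendsto_id
    filter_upwards [hP, t1.eventually hP, t2.eventually hP, e1, e2,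
      eventually_gt_atTop (0 : ℝ)] with u hu h1 h2 he1 he2 hu0
    obtain ⟨humem, -⟩ := hu
    obtain ⟨h1m, h1e⟩ := h1
    obtain ⟨h2m, h2e⟩ := h2
    have hgu : 0 < ginv u := humem.1
    have hlt1 : x * ginv u < ginv (u * y₁) := (lt_div_iff₀ hgu).mp he1
    have hlt2 : ginv (u * y₂) < x * ginv u := (div_lt_iff₀ hgu).mp he2
    have hmemx : x * ginv u ∈ Ioo 0 δ := ⟨by positivity, hlt1.trans h1m.2⟩
    have hub : g (x * ginv u) < u * y₂ := by
      have := hga h2m hmemx hlt2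
      rwa [h2e] at this
    have hlb : u * y₁ < g (x * ginv u) := by
      have := hga hmemx h1m hlt1
      rwa [h1e] at this
    have hdiv2 : g (x * ginv u) / u < y₂ := (div_lt_iff₀ hu0).mpr (by linarith)
    have hdiv1 : y₁ < g (x * ginv u) / u := (lt_div_iff₀ hu0).mpr (by linarith)
    rw [Real.dist_eq, abs_sub_lt_iff]
    constructor <;> [linarith; linarith]
  have hsub : Tendsto (fun u => g (x * ginv u) / u - 1) atTop (𝓝 (y₀ - 1)) :=
    key.sub tendsto_const_nhds
  refine Tendsto.congr' ?_ hsub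
  filter_upwards [eventually_gt_atTop (0 : ℝ)] with u hu
  rw [sub_div, div_self hu.ne']
end

section
/- Let δ > 0 and let g : (0,δ) → ℝ be continuous and strictly decreasing with lim_{t→0⁺} g(t) = D for some D ∈ ℝ, with inverse g⁻¹ defined on the image of g. Let γ > 0 and suppose that for every y > 0, lim_{s→0⁺} g⁻¹(D − s y) / g⁻¹(D − s) = y^{γ}. Then for every x > 0, lim_{u→D⁻} ( g( x · g⁻¹(u) ) − u ) / (D − u) = 1 − x^{1/γ}. -/
open Set Filter Topology

/-- Type 3 observables: if `g(t) → D` as `t → 0⁺` and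
`g⁻¹(D − sy)/g⁻¹(D − s) → y^γ` as `s → 0⁺` for every `y > 0`, then
`(g(x·g⁻¹(u)) − u)/(D − u) → 1 − x^{1/γ}` as `u → D⁻`, for every `x > 0`. -/
theorem statement12 (δ : ℝ) (hδ : 0 < δ) (g ginv : ℝ → ℝ)
    (hgc : ContinuousOn g (Ioo 0 δ)) (hga : StrictAntiOn g (Ioo 0 δ))
    (D : ℝ) (hL : Tendsto g (nhdsWithin 0 (Ioi 0)) (nhds D))
    (hginv : ∀ t ∈ Ioo 0 δ, ginv (g t) = t)
    (γ : ℝ) (hγ : 0 < γ)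
    (hlim : ∀ y : ℝ, 0 < y →
      Tendsto (fun s => ginv (D - s * y) / ginv (D - s)) (nhdsWithin 0 (Ioi 0))
        (nhds (y ^ γ))) :
    ∀ x : ℝ, 0 < x →
      Tendsto (fun u => (g (x * ginv u) - u) / (D - u)) (nhdsWithin D (Iio D))
        (nhds (1 - x ^ (1 / γ))) := by
  intro x hx
  have hhalf : δ / 2 ∈ Ioo 0 δ := ⟨by linarith, by linarith⟩
  set c₀ := g (δ / 2) with hc₀
  -- every value of g on (0,δ) is < D
  have gD : ∀ t ∈ Ioo 0 δ, g t < D := by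
    intro t ht
    have h2 : t / 2 ∈ Ioo 0 δ := ⟨by linarith [ht.1], by linarith [ht.1, ht.2]⟩
    have h1 : g t < g (t / 2) := hga h2 ht (by linarith [ht.1])
    have h3 : g (t / 2) ≤ D := by
      refine ge_of_tendsto hL ?_
      filter_upwards [Ioo_mem_nhdsGT_of_mem ⟨le_refl 0, h2.1⟩] with t' ht'
      have ht'' : t' ∈ Ioo 0 δ := ⟨ht'.1, lt_trans ht'.2 h2.2⟩
      exact le_of_lt (hga ht'' h2 ht'.2)
    linarith
  have hc₀D : c₀ < D := gD _ hhalf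
  -- inverse facts for c ∈ (c₀, D)
  have hGinv : ∀ c, c₀ < c → c < D → ginv c ∈ Ioc 0 (δ / 2) ∧ g (ginv c) = c := by
    intro c hc1 hc2
    -- find t₁ ∈ (0, δ/2) with c < g t₁
    have hev : ∀ᶠ t' in 𝓝[>] (0:ℝ), c < g t' := hL.eventually_const_lt hc2
    have hmem : Ioo (0:ℝ) (δ / 2) ∈ 𝓝[>] (0:ℝ) := Ioo_mem_nhdsGT_of_mem ⟨le_refl 0, hhalf.1⟩
    obtain ⟨t₁, ht₁g, ht₁mem⟩ := (hev.and (eventually_of_mem hmem (fun z hz => hz))).exists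
    have ht₁δ : t₁ ∈ Ioo 0 δ := ⟨ht₁mem.1, lt_trans ht₁mem.2 hhalf.2⟩
    have hsub : Icc t₁ (δ / 2) ⊆ Ioo 0 δ := fun z hz => ⟨lt_of_lt_of_le ht₁mem.1 hz.1,
      lt_of_le_of_lt hz.2 hhalf.2⟩
    have hcont : ContinuousOn g (Icc t₁ (δ / 2)) := hgc.mono hsub
    have hmemc : c ∈ Icc (g (δ / 2)) (g t₁) := ⟨le_of_lt hc1, le_of_lt ht₁g⟩
    obtain ⟨t, htmem, hgt⟩ := intermediate_value_Icc' (le_of_lt ht₁mem.2) hcont hmemc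
    have htδ : t ∈ Ioo 0 δ := hsub htmem
    rw [← hgt, hginv t htδ]
    exact ⟨⟨htδ.1, htmem.2⟩, by rw [hgt]⟩
  -- ginv (D - s) is eventually small
  have hsmall : ∀ ε : ℝ, 0 < ε → ∀ᶠ s in 𝓝[>] (0:ℝ), ginv (D - s) < ε := by
    intro ε hε
    set ε' := min ε (δ / 2) with hε'
    have hε'pos : 0 < ε' := lt_min hε hhalf.1
    have hε'mem : ε' ∈ Ioo 0 δ := ⟨hε'pos, lt_of_le_of_lt (min_le_right _ _) hhalf.2⟩
    have hgε' : g ε' < D := gD _ hε'mem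
    have hc₀ε' : c₀ ≤ g ε' := by
      rcases eq_or_lt_of_le (min_le_right ε (δ/2) : ε' ≤ δ/2) with h | h
      · rw [hc₀, ← h]
      · exact le_of_lt (hga hε'mem hhalf h)
    filter_upwards [Ioo_mem_nhdsGT_of_mem ⟨le_refl 0, sub_pos.mpr hgε'⟩] with s hs
    have h1 : c₀ < D - s := by have := hs.2; linarith
    have h2 : D - s < D := by have := hs.1; linarith
    obtain ⟨hmem, heq⟩ := hGinv _ h1 h2
    by_contra hcon
    push_neg at hcon
    have hle : ε' ≤ ginv (D - s) := le_trans (min_le_left _ _) hcon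
    have hmem' : ginv (D - s) ∈ Ioo 0 δ := ⟨hmem.1, lt_of_le_of_lt hmem.2 hhalf.2⟩
    have : g (ginv (D - s)) ≤ g ε' := hga.antitoneOn hε'mem hmem' hle
    rw [heq] at this
    linarith [hs.2]
  set α := x ^ (1 / γ) with hα
  have hαpos : 0 < α := Real.rpow_pos_of_pos hx _
  have hαγ : α ^ γ = x := by
    rw [hα, ← Real.rpow_mul (le_of_lt hx), one_div_mul_cancel (ne_of_gt hγ), Real.rpow_one]
  -- key limit
  have key : Tendsto (fun s => (D - g (x * ginv (D - s))) / s) (𝓝[>] (0:ℝ)) (𝓝 α) := by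
    rw [tendsto_order]
    constructor
    · intro b hb
      set y := (max b 0 + α) / 2 with hy
      have hypos : 0 < y := by
        have : (0:ℝ) ≤ max b 0 := le_max_right _ _
        have := hαpos; positivity
      have hyα : y < α := by
        have : max b 0 < α := max_lt hb hαpos
        rw [hy]; linarith
      have hby : b < y := by
        have : b ≤ max b 0 := le_max_left _ _
        rw [hy]; linarith [hb, hαpos, max_lt hb hαpos]
      have hyx : y ^ γ < x := by
        rw [← hαγ]
        exact Real.rpow_lt_rpow (le_of_lt hypos) hyα hγ
      have hev1 : ∀ᶠ s in 𝓝[>] (0:ℝ), ginv (D - s * y) / ginv (D - s) < x :=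
        (hlim y hypos).eventually_lt_const hyx
      have hev2 : ∀ᶠ s in 𝓝[>] (0:ℝ), s ∈ Ioo 0 (min (D - c₀) ((D - c₀) / y)) :=
        eventually_of_mem (Ioo_mem_nhdsGT_of_mem ⟨le_refl 0,
          lt_min (sub_pos.mpr hc₀D) (div_pos (sub_pos.mpr hc₀D) hypos)⟩) (fun z hz => hz)
      have hev3 : ∀ᶠ s in 𝓝[>] (0:ℝ), ginv (D - s) < δ / x :=
        hsmall _ (div_pos hδ hx)
      filter_upwards [hev1, hev2, hev3] with s hs1 hs2 hs3
      have hspos : 0 < s := hs2.1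
      have hsD : s < D - c₀ := lt_of_lt_of_le hs2.2 (min_le_left _ _)
      have hsyD : s * y < D - c₀ := by
        have : s < (D - c₀) / y := lt_of_lt_of_le hs2.2 (min_le_right _ _)
        calc s * y < (D - c₀) / y * y := by exact mul_lt_mul_of_pos_right this hypos
        _ = D - c₀ := div_mul_cancel₀ _ (ne_of_gt hypos)
      obtain ⟨ht, hgt⟩ := hGinv (D - s) (by linarith) (by linarith)
      obtain ⟨ht', hgt'⟩ := hGinv (D - s * y) (by linarith)
        (by nlinarith)
      set t := ginv (D - s)
      set t₁ := ginv (D - s * y)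
      have htpos : 0 < t := ht.1
      have ht₁lt : t₁ < x * t := by
        rw [div_lt_iff₀ htpos] at hs1
        exact hs1
      have hxtmem : x * t ∈ Ioo 0 δ := by
        constructor
        · positivity
        · calc x * t < x * (δ / x) := by exact mul_lt_mul_of_pos_left hs3 hx
          _ = δ := by field_simp
      have ht₁mem : t₁ ∈ Ioo 0 δ := ⟨ht'.1, lt_of_le_of_lt ht'.2 hhalf.2⟩
      have hglt : g (x * t) < g t₁ := hga ht₁mem hxtmem ht₁lt
      rw [hgt'] at hglt
      rw [lt_div_iff₀ hspos]
      calc b * s < y * s := mul_lt_mul_of_pos_right hby hspos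
      _ ≤ D - g (x * t) := by linarith [hglt]
    · intro b hb
      set y := (α + b) / 2 with hy
      have hypos : 0 < y := by rw [hy]; linarith
      have hαy : α < y := by rw [hy]; linarith
      have hyb : y < b := by rw [hy]; linarith
      have hyx : x < y ^ γ := by
        rw [← hαγ]
        exact Real.rpow_lt_rpow (le_of_lt hαpos) hαy hγ
      have hev1 : ∀ᶠ s in 𝓝[>] (0:ℝ), x < ginv (D - s * y) / ginv (D - s) :=
        (hlim y hypos).eventually_const_lt hyx
      have hev2 : ∀ᶠ s in 𝓝[>] (0:ℝ), s ∈ Ioo 0 (min (D - c₀) ((D - c₀) / y)) :=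
        eventually_of_mem (Ioo_mem_nhdsGT_of_mem ⟨le_refl 0,
          lt_min (sub_pos.mpr hc₀D) (div_pos (sub_pos.mpr hc₀D) hypos)⟩) (fun z hz => hz)
      have hev3 : ∀ᶠ s in 𝓝[>] (0:ℝ), ginv (D - s) < δ / x :=
        hsmall _ (div_pos hδ hx)
      filter_upwards [hev1, hev2, hev3] with s hs1 hs2 hs3
      have hspos : 0 < s := hs2.1
      have hsD : s < D - c₀ := lt_of_lt_of_le hs2.2 (min_le_left _ _)
      have hsyD : s * y < D - c₀ := by
        have : s < (D - c₀) / y := lt_of_lt_of_le hs2.2 (min_le_right _ _)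
        calc s * y < (D - c₀) / y * y := mul_lt_mul_of_pos_right this hypos
        _ = D - c₀ := div_mul_cancel₀ _ (ne_of_gt hypos)
      obtain ⟨ht, hgt⟩ := hGinv (D - s) (by linarith) (by linarith)
      obtain ⟨ht', hgt'⟩ := hGinv (D - s * y) (by linarith) (by nlinarith)
      set t := ginv (D - s)
      set t₁ := ginv (D - s * y)
      have htpos : 0 < t := ht.1
      have ht₁gt : x * t < t₁ := by
        rw [lt_div_iff₀ htpos] at hs1
        exact hs1
      have hxtmem : x * t ∈ Ioo 0 δ := by
        constructor
        · positivity
        · calc x * t < x * (δ / x) := mul_lt_mul_of_pos_left hs3 hx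
          _ = δ := by field_simp
      have ht₁mem : t₁ ∈ Ioo 0 δ := ⟨ht'.1, lt_of_le_of_lt ht'.2 hhalf.2⟩
      have hglt : g t₁ < g (x * t) := hga hxtmem ht₁mem ht₁gt
      rw [hgt'] at hglt
      rw [div_lt_iff₀ hspos]
      calc D - g (x * t) < s * y := by linarith
      _ = y * s := mul_comm s y
      _ < b * s := mul_lt_mul_of_pos_right hyb hspos
  -- main limit in s
  have main : Tendsto (fun s => (g (x * ginv (D - s)) - (D - s)) / s) (𝓝[>] (0:ℝ))
      (𝓝 (1 - α)) := by
    have h1 : Tendsto (fun s => 1 - (D - g (x * ginv (D - s))) / s) (𝓝[>] (0:ℝ))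
        (𝓝 (1 - α)) := tendsto_const_nhds.sub key
    refine h1.congr' ?_
    filter_upwards [self_mem_nhdsWithin] with s hs
    have hs' : (s:ℝ) ≠ 0 := ne_of_gt hs
    field_simp
    ring
  -- substitute s = D - u
  have hsub : Tendsto (fun u => D - u) (𝓝[<] D) (𝓝[>] (0:ℝ)) := by
    apply tendsto_nhdsWithin_of_tendsto_nhds_of_eventually_within
    · have : Tendsto (fun u => D - u) (𝓝 D) (𝓝 (D - D)) :=
        (continuous_const.sub continuous_id).tendsto D
      rw [sub_self] at this
      exact this.mono_left nhdsWithin_le_nhds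
    · filter_upwards [self_mem_nhdsWithin] with u hu
      exact sub_pos.mpr (mem_Iio.mp hu)
  have := main.comp hsub
  refine this.congr ?_
  intro u
  simp [Function.comp, sub_sub_cancel]
end

section
/- Let δ > 0 and let g : (0,δ) → ℝ be continuous and strictly decreasing, with L := lim_{t→0⁺} g(t) ∈ ℝ ∪ {+∞} and inverse g⁻¹. Suppose there is a function q with values in (0,∞) such that for every y ∈ ℝ, g⁻¹(s + y q(s)) is defined for all s in the domain sufficiently close to L and lim_{s→L⁻} g⁻¹(s + y q(s)) / g⁻¹(s) = e^{−y}. Let M > 1 and for κ ∈ ℕ₀ and u in the image of g define g_{κ,u}(t) := Σ_{i=0}^{κ} ( g(M^i t) − u ). Then for every κ ∈ ℕ₀ and every x > 0, lim_{u→L⁻} g_{κ,u}( x · g⁻¹(u) ) / q(u) = −(κ+1) log x − (κ(κ+1)/2) · log M. -/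
open Set Filter Topology

lemma lbelow_eventually_gt {L : EReal} {a : ℝ} (h : (a : EReal) < L) :
    ∀ᶠ u in lbelow L, a < u := by
  have h1 : Ioi (a : EReal) ∈ 𝓝[<] L :=
    mem_nhdsWithin_of_mem_nhds (isOpen_Ioi.mem_nhds h)
  have h2 : (fun x : ℝ => (x : EReal)) ⁻¹' (Ioi (a : EReal)) ∈ lbelow L :=
    Filter.preimage_mem_comap h1
  filter_upwards [h2] with u hu
  simpa using hu


/-- Type 1 computation in the AOT analysis: with
`g_{κ,u}(t) = Σ_{i=0}^{κ}(g(Mⁱt) − u)`, one has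
`g_{κ,u}(x·g⁻¹(u))/q(u) → −(κ+1)·log x − (κ(κ+1)/2)·log M` as `u → L⁻`. -/
theorem statement13 (δ : ℝ) (hδ : 0 < δ) (g ginv : ℝ → ℝ)
    (hgc : ContinuousOn g (Ioo 0 δ)) (hga : StrictAntiOn g (Ioo 0 δ))
    (L : EReal) (hL : Tendsto (fun t => (g t : EReal)) (nhdsWithin 0 (Ioi 0)) (nhds L))
    (hginv : ∀ t ∈ Ioo 0 δ, ginv (g t) = t)
    (q : ℝ → ℝ) (hq : ∀ s ∈ g '' Ioo 0 δ, 0 < q s)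
    (hlim : ∀ y : ℝ,
      (∀ᶠ s in lbelow L, s + y * q s ∈ g '' Ioo 0 δ) ∧
        Tendsto (fun s => ginv (s + y * q s) / ginv s) (lbelow L) (nhds (Real.exp (-y))))
    (M : ℝ) (hM : 1 < M)
    (gk : ℕ → ℝ → ℝ → ℝ)
    (hgk : ∀ (κ : ℕ) (u t : ℝ), gk κ u t = ∑ i ∈ Finset.range (κ + 1), (g (M ^ i * t) - u)) :
    ∀ (κ : ℕ) (x : ℝ), 0 < x →
      Tendsto (fun u => gk κ u (x * ginv u) / q u) (lbelow L)
        (nhds (-((κ : ℝ) + 1) * Real.log x - ((κ : ℝ) * ((κ : ℝ) + 1) / 2) * Real.log M)) := by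
  intro κ x hx
  have himg : ∀ᶠ u in lbelow L, u ∈ g '' Ioo 0 δ := by
    have := (hlim 0).1
    simpa using this
  have hginv_mem : ∀ᶠ u in lbelow L, ginv u ∈ Ioo 0 δ ∧ g (ginv u) = u := by
    filter_upwards [himg] with u hu
    obtain ⟨t, ht, rfl⟩ := hu
    rw [hginv t ht]
    exact ⟨ht, rfl⟩
  -- ginv u gets arbitrarily small
  have hsmall : ∀ ε : ℝ, 0 < ε → ∀ᶠ u in lbelow L, ginv u < ε := by
    intro ε hε
    set ε' := min ε δ / 2 with hε'def
    have hε'pos : 0 < ε' := by positivity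
    have hε'lt : ε' < δ := by
      have : min ε δ ≤ δ := min_le_right _ _
      simp only [hε'def]; linarith
    have hε'le : ε' ≤ ε := by
      have : min ε δ ≤ ε := min_le_left _ _
      simp only [hε'def]; linarith
    have hε'mem : ε' ∈ Ioo 0 δ := ⟨hε'pos, hε'lt⟩
    have hhalf : ε' / 2 ∈ Ioo 0 δ := ⟨by positivity, by linarith⟩
    have hLge : (g (ε' / 2) : EReal) ≤ L := by
      refine ge_of_tendsto hL ?_
      have hmem : Ioo (0 : ℝ) (ε' / 2) ∈ 𝓝[>] (0 : ℝ) :=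
        Ioo_mem_nhdsGT_of_mem ⟨le_refl _, by positivity⟩
      filter_upwards [hmem] with t ht
      have ht' : t ∈ Ioo 0 δ := ⟨ht.1, ht.2.trans (by linarith)⟩
      exact_mod_cast (hga ht' hhalf ht.2).le
    have hlt : (g ε' : EReal) < L := by
      refine lt_of_lt_of_le ?_ hLge
      exact_mod_cast hga hhalf hε'mem (by linarith)
    filter_upwards [lbelow_eventually_gt hlt, hginv_mem] with u hu hmem
    obtain ⟨htmem, hgt⟩ := hmem
    have hlt2 : ginv u < ε' := by
      by_contra hcon
      push_neg at hcon
      rcases eq_or_lt_of_le hcon with h1 | h1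
      · rw [h1, hgt] at hu; exact lt_irrefl u hu
      · have := hga hε'mem htmem h1
        rw [hgt] at this; linarith
    linarith
  -- key pointwise limit
  have key : ∀ c : ℝ, 0 < c →
      Tendsto (fun u => (g (c * ginv u) - u) / q u) (lbelow L) (𝓝 (-Real.log c)) := by
    intro c hc
    rw [tendsto_order]
    constructor
    · intro y hy
      set y'' := (y - Real.log c) / 2 with hy''def
      have h1 : y < y'' := by simp only [hy''def]; linarith
      have h2 : y'' < -Real.log c := by simp only [hy''def]; linarith
      have hexp : c < Real.exp (-y'') := by
        rw [← Real.exp_log hc]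
        exact Real.exp_lt_exp.2 (by linarith)
      obtain ⟨hmem, hlim''⟩ := hlim y''
      have hratio : ∀ᶠ u in lbelow L, c < ginv (u + y'' * q u) / ginv u :=
        hlim''.eventually (eventually_gt_nhds hexp)
      filter_upwards [hmem, hratio, hginv_mem, hsmall (δ / c) (by positivity)]
        with u hmem' hrat hmem2 hsm
      obtain ⟨htmem, hgu⟩ := hmem2
      obtain ⟨w, hw, hgw⟩ := hmem'
      have hcg : c * ginv u ∈ Ioo 0 δ := by
        constructor
        · exact mul_pos hc htmem.1
        · calc c * ginv u < c * (δ / c) := by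
                exact mul_lt_mul_of_pos_left hsm hc
            _ = δ := by field_simp
      rw [← hgw, hginv w hw] at hrat
      have hwlt : c * ginv u < w := (lt_div_iff₀ htmem.1).1 hrat
      have hglt : g w < g (c * ginv u) := hga hcg hw hwlt
      rw [hgw] at hglt
      have hqu : 0 < q u := hq u ⟨ginv u, htmem, hgu⟩
      have : y'' < (g (c * ginv u) - u) / q u := by
        rw [lt_div_iff₀ hqu]; linarith
      linarith
    · intro y hy
      set y'' := (y - Real.log c) / 2 with hy''def
      have h1 : y'' < y := by simp only [hy''def]; linarith
      have h2 : -Real.log c < y'' := by simp only [hy''def]; linarith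
      have hexp : Real.exp (-y'') < c := by
        rw [← Real.exp_log hc]
        exact Real.exp_lt_exp.2 (by linarith)
      obtain ⟨hmem, hlim''⟩ := hlim y''
      have hratio : ∀ᶠ u in lbelow L, ginv (u + y'' * q u) / ginv u < c :=
        hlim''.eventually (eventually_lt_nhds hexp)
      filter_upwards [hmem, hratio, hginv_mem, hsmall (δ / c) (by positivity)]
        with u hmem' hrat hmem2 hsm
      obtain ⟨htmem, hgu⟩ := hmem2
      obtain ⟨w, hw, hgw⟩ := hmem'
      have hcg : c * ginv u ∈ Ioo 0 δ := by
        constructor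
        · exact mul_pos hc htmem.1
        · calc c * ginv u < c * (δ / c) := by
                exact mul_lt_mul_of_pos_left hsm hc
            _ = δ := by field_simp
      rw [← hgw, hginv w hw] at hrat
      have hwlt : w < c * ginv u := (div_lt_iff₀ htmem.1).1 hrat
      have hglt : g (c * ginv u) < g w := hga hw hcg hwlt
      rw [hgw] at hglt
      have hqu : 0 < q u := hq u ⟨ginv u, htmem, hgu⟩
      have : (g (c * ginv u) - u) / q u < y'' := by
        rw [div_lt_iff₀ hqu]; linarith
      linarith
  -- sum
  have hMpos : (0 : ℝ) < M := lt_trans one_pos hM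
  have hsum : Tendsto
      (fun u => ∑ i ∈ Finset.range (κ + 1), (g ((M ^ i * x) * ginv u) - u) / q u)
      (lbelow L) (𝓝 (∑ i ∈ Finset.range (κ + 1), -Real.log (M ^ i * x))) :=
    tendsto_finset_sum _ fun i _ => key (M ^ i * x) (by positivity)
  have hgauss : ∑ i ∈ Finset.range (κ + 1), (i : ℝ) = (κ : ℝ) * ((κ : ℝ) + 1) / 2 := by
    have h := Finset.sum_range_id_mul_two (κ + 1)
    have h2 : ((∑ i ∈ Finset.range (κ + 1), i : ℕ) : ℝ) * 2 = ((κ : ℝ) + 1) * κ := by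
      exact_mod_cast congrArg (Nat.cast : ℕ → ℝ) h
    push_cast at h2 ⊢
    linarith
  have hval : ∑ i ∈ Finset.range (κ + 1), -Real.log (M ^ i * x)
      = -((κ : ℝ) + 1) * Real.log x - ((κ : ℝ) * ((κ : ℝ) + 1) / 2) * Real.log M := by
    have hterm : ∀ i ∈ Finset.range (κ + 1),
        -Real.log (M ^ i * x) = (i : ℝ) * (-Real.log M) - Real.log x := by
      intro i _
      rw [Real.log_mul (pow_pos hMpos i).ne' hx.ne', Real.log_pow]
      push_cast; ring
    rw [Finset.sum_congr rfl hterm, Finset.sum_sub_distrib, ← Finset.sum_mul, hgauss,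
      Finset.sum_const, Finset.card_range, nsmul_eq_mul]
    push_cast; ring
  rw [hval] at hsum
  refine hsum.congr fun u => ?_
  rw [hgk, Finset.sum_div]
  refine Finset.sum_congr rfl fun i _ => ?_
  ring_nf
end

section
/- Let δ > 0 and let g : (0,δ) → ℝ be continuous and strictly decreasing with lim_{t→0⁺} g(t) = +∞, with inverse g⁻¹. Let β > 0 and suppose that for every y > 0, lim_{s→∞} g⁻¹(s y) / g⁻¹(s) = y^{−β}. Let M > 1 and for κ ∈ ℕ₀ and u in the image of g define g_{κ,u}(t) := Σ_{i=0}^{κ} ( g(M^i t) − u ). Then for every κ ∈ ℕ₀ and every x > 0, lim_{u→∞} g_{κ,u}( x · g⁻¹(u) ) / u = ( (1 − M^{−(κ+1)/β}) / (1 − M^{−1/β}) ) · x^{−1/β} − (κ+1). -/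
open Set Filter Topology

private lemma exists_preim (δ : ℝ) (g : ℝ → ℝ)
    (hgc : ContinuousOn g (Ioo 0 δ))
    (hL : Tendsto g (nhdsWithin 0 (Ioi 0)) atTop)
    {s : ℝ} (hs : s ∈ Ioo 0 δ) {u : ℝ} (hu : g s ≤ u) :
    ∃ t ∈ Ioc (0:ℝ) s, g t = u := by
  have h1 : ∀ᶠ t in nhdsWithin 0 (Ioi 0), u ≤ g t := hL.eventually (eventually_ge_atTop u)
  rw [eventually_nhdsWithin_iff] at h1
  obtain ⟨ε, hε, hball⟩ := Metric.eventually_nhds_iff.1 h1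
  set t' : ℝ := min (ε/2) s with ht'
  have ht'0 : 0 < t' := lt_min (by linarith) hs.1
  have ht's : t' ≤ s := min_le_right _ _
  have hgt' : u ≤ g t' := by
    refine hball ?_ ht'0
    simp only [dist_zero_right, Real.norm_eq_abs, abs_of_pos ht'0]
    exact lt_of_le_of_lt (min_le_left _ _) (by linarith)
  have hcont : ContinuousOn g (Icc t' s) := hgc.mono (fun y hy =>
    ⟨lt_of_lt_of_le ht'0 hy.1, lt_of_le_of_lt hy.2 hs.2⟩)
  have := intermediate_value_Icc' ht's hcont (⟨hu, hgt'⟩ : u ∈ Icc (g s) (g t'))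
  obtain ⟨t, ht, hgt⟩ := this
  exact ⟨t, ⟨lt_of_lt_of_le ht'0 ht.1, ht.2⟩, hgt⟩

private lemma ev_ginv (δ : ℝ) (g ginv : ℝ → ℝ)
    (hgc : ContinuousOn g (Ioo 0 δ))
    (hL : Tendsto g (nhdsWithin 0 (Ioi 0)) atTop)
    (hginv : ∀ t ∈ Ioo 0 δ, ginv (g t) = t)
    {s : ℝ} (hs : s ∈ Ioo 0 δ) :
    ∀ᶠ u in atTop, ginv u ∈ Ioc 0 s ∧ g (ginv u) = u := by
  filter_upwards [eventually_ge_atTop (g s)] with u hu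
  obtain ⟨t, ht, hgt⟩ := exists_preim δ g hgc hL hs hu
  have htδ : t ∈ Ioo 0 δ := ⟨ht.1, lt_of_le_of_lt ht.2 hs.2⟩
  have : ginv u = t := by rw [← hgt, hginv t htδ]
  rw [this, hgt]
  exact ⟨ht, rfl⟩

private lemma key_lim (δ : ℝ) (hδ : 0 < δ) (g ginv : ℝ → ℝ)
    (hgc : ContinuousOn g (Ioo 0 δ)) (hga : StrictAntiOn g (Ioo 0 δ))
    (hL : Tendsto g (nhdsWithin 0 (Ioi 0)) atTop)
    (hginv : ∀ t ∈ Ioo 0 δ, ginv (g t) = t)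
    (β : ℝ) (hβ : 0 < β)
    (hlim : ∀ y : ℝ, 0 < y →
      Tendsto (fun s => ginv (s * y) / ginv s) atTop (nhds (y ^ (-β))))
    {c : ℝ} (hc : 0 < c) :
    Tendsto (fun u => g (c * ginv u) / u) atTop (nhds (c ^ (-1/β))) := by
  -- choose s with 0 < s < δ and c * s < δ
  set s : ℝ := min (δ/2) (δ/(2*c)) with hsdef
  have hs : s ∈ Ioo 0 δ := ⟨lt_min (by linarith) (by positivity), lt_of_le_of_lt (min_le_left _ _) (by linarith)⟩
  have hcs : c * s < δ := by
    calc c * s ≤ c * (δ/(2*c)) := by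
          exact mul_le_mul_of_nonneg_left (min_le_right _ _) hc.le
    _ = δ/2 := by field_simp
    _ < δ := by linarith
  have hev := ev_ginv δ g ginv hgc hL hginv hs
  -- c * ginv u ∈ Ioo 0 δ eventually
  have hevc : ∀ᶠ u in atTop, c * ginv u ∈ Ioo 0 δ := by
    filter_upwards [hev] with u ⟨h1, _⟩
    exact ⟨mul_pos hc h1.1, lt_of_le_of_lt (mul_le_mul_of_nonneg_left h1.2 hc.le) hcs⟩
  have hLpos : 0 < c ^ (-1/β) := Real.rpow_pos_of_pos hc _
  rw [tendsto_order]
  constructor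
  · intro a ha
    rcases le_or_gt a 0 with ha0 | ha0
    · -- a ≤ 0 : show g(c*ginv u)/u > 0 eventually
      have hgtop : Tendsto (fun u => g (c * ginv u)) atTop atTop := by
        apply hL.comp
        rw [tendsto_nhdsWithin_iff]
        constructor
        · -- c * ginv u → 0
          rw [tendsto_order]
          constructor
          · intro b hb
            filter_upwards [hevc] with u h using lt_trans hb h.1
          · intro b hb
            have hsb : min s (b/(2*c)) ∈ Ioo 0 δ :=
              ⟨lt_min hs.1 (by positivity), lt_of_le_of_lt (min_le_left _ _) hs.2⟩
            filter_upwards [ev_ginv δ g ginv hgc hL hginv hsb] with u ⟨h1, _⟩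
            calc c * ginv u ≤ c * (b/(2*c)) :=
                  mul_le_mul_of_nonneg_left (le_trans h1.2 (min_le_right _ _)) hc.le
            _ = b/2 := by field_simp
            _ < b := by linarith
        · filter_upwards [hevc] with u h using h.1
      filter_upwards [hgtop.eventually_ge_atTop 1, eventually_gt_atTop (0:ℝ)] with u h1 h2
      exact lt_of_le_of_lt ha0 (div_pos (by linarith) h2)
    · -- 0 < a < c^(-1/β)
      have hβ0 : β ≠ 0 := hβ.ne'
      have hcc : (c ^ (-1/β : ℝ)) ^ (-β : ℝ) = c := by
        rw [← Real.rpow_mul hc.le, show (-1/β)*(-β) = 1 by field_simp, Real.rpow_one]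
      have haβ : c < a ^ (-β) := by
        have := Real.rpow_lt_rpow_of_neg ha0 ha (neg_neg_iff_pos.2 hβ)
        rwa [hcc] at this
      have hratio := (hlim a ha0).eventually (eventually_gt_nhds haβ)
      -- ginv (u*a) facts
      have heva : ∀ᶠ u in atTop, ginv (u*a) ∈ Ioc 0 s ∧ g (ginv (u*a)) = u*a := by
        have hta : Tendsto (fun u : ℝ => u * a) atTop atTop :=
          Tendsto.atTop_mul_const ha0 tendsto_id
        exact hta.eventually (ev_ginv δ g ginv hgc hL hginv hs)
      filter_upwards [hev, heva, hratio, eventually_gt_atTop (0:ℝ)] with u h1 h2 h3 hu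
      -- c * ginv u < ginv (u*a)
      have hlt : c * ginv u < ginv (u*a) := by
        rw [lt_div_iff₀ h1.1.1] at h3
        linarith [h3]
      have hmem1 : c * ginv u ∈ Ioo 0 δ :=
        ⟨mul_pos hc h1.1.1, lt_of_le_of_lt (mul_le_mul_of_nonneg_left h1.1.2 hc.le) hcs⟩
      have hmem2 : ginv (u*a) ∈ Ioo 0 δ := ⟨h2.1.1, lt_of_le_of_lt h2.1.2 hs.2⟩
      have := hga hmem1 hmem2 hlt
      rw [h2.2] at this
      rw [lt_div_iff₀ hu]
      linarith [this]
  · intro b hb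
    have hb0 : 0 < b := lt_trans hLpos hb
    have hβ0 : β ≠ 0 := hβ.ne'
    have hcc : (c ^ (-1/β : ℝ)) ^ (-β : ℝ) = c := by
      rw [← Real.rpow_mul hc.le, show (-1/β)*(-β) = 1 by field_simp, Real.rpow_one]
    have hbβ : b ^ (-β) < c := by
      have := Real.rpow_lt_rpow_of_neg hLpos hb (neg_neg_iff_pos.2 hβ)
      rwa [hcc] at this
    have hratio := (hlim b hb0).eventually (eventually_lt_nhds hbβ)
    have hevb : ∀ᶠ u in atTop, ginv (u*b) ∈ Ioc 0 s ∧ g (ginv (u*b)) = u*b := by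
      have htb : Tendsto (fun u : ℝ => u * b) atTop atTop :=
        Tendsto.atTop_mul_const hb0 tendsto_id
      exact htb.eventually (ev_ginv δ g ginv hgc hL hginv hs)
    filter_upwards [hev, hevb, hratio, eventually_gt_atTop (0:ℝ)] with u h1 h2 h3 hu
    have hlt : ginv (u*b) < c * ginv u := by
      rw [div_lt_iff₀ h1.1.1] at h3
      linarith [h3]
    have hmem1 : c * ginv u ∈ Ioo 0 δ :=
      ⟨mul_pos hc h1.1.1, lt_of_le_of_lt (mul_le_mul_of_nonneg_left h1.1.2 hc.le) hcs⟩
    have hmem2 : ginv (u*b) ∈ Ioo 0 δ := ⟨h2.1.1, lt_of_le_of_lt h2.1.2 hs.2⟩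
    have := hga hmem2 hmem1 hlt
    rw [h2.2] at this
    rw [div_lt_iff₀ hu]
    linarith [this]

/-- Type 2 computation in the AOT analysis: with
`g_{κ,u}(t) = Σ_{i=0}^{κ}(g(Mⁱt) − u)`, one has
`g_{κ,u}(x·g⁻¹(u))/u → ((1 − M^{−(κ+1)/β})/(1 − M^{−1/β}))·x^{−1/β} − (κ+1)` as `u → ∞`. -/
theorem statement14 (δ : ℝ) (hδ : 0 < δ) (g ginv : ℝ → ℝ)
    (hgc : ContinuousOn g (Ioo 0 δ)) (hga : StrictAntiOn g (Ioo 0 δ))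
    (hL : Tendsto g (nhdsWithin 0 (Ioi 0)) atTop)
    (hginv : ∀ t ∈ Ioo 0 δ, ginv (g t) = t)
    (β : ℝ) (hβ : 0 < β)
    (hlim : ∀ y : ℝ, 0 < y →
      Tendsto (fun s => ginv (s * y) / ginv s) atTop (nhds (y ^ (-β))))
    (M : ℝ) (hM : 1 < M)
    (gk : ℕ → ℝ → ℝ → ℝ)
    (hgk : ∀ (κ : ℕ) (u t : ℝ), gk κ u t = ∑ i ∈ Finset.range (κ + 1), (g (M ^ i * t) - u)) :
    ∀ (κ : ℕ) (x : ℝ), 0 < x →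
      Tendsto (fun u => gk κ u (x * ginv u) / u) atTop
        (nhds ((1 - M ^ (-((κ : ℝ) + 1) / β)) / (1 - M ^ (-1 / β)) * x ^ (-1 / β) -
          ((κ : ℝ) + 1))) := by
  intro κ x hx
  have hM0 : (0:ℝ) < M := lt_trans one_pos hM
  -- each term limit
  have hterm : ∀ i ∈ Finset.range (κ + 1),
      Tendsto (fun u => g (M ^ i * (x * ginv u)) / u - 1) atTop
        (nhds ((M ^ i * x) ^ (-1/β) - 1)) := by
    intro i _
    have hci : (0:ℝ) < M ^ i * x := mul_pos (pow_pos hM0 i) hx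
    have := key_lim δ hδ g ginv hgc hga hL hginv β hβ hlim hci
    have heq : (fun u => g (M ^ i * x * ginv u) / u) =
        (fun u => g (M ^ i * (x * ginv u)) / u) := by
      funext u; rw [mul_assoc]
    rw [heq] at this
    exact this.sub_const 1
  have hsum := tendsto_finset_sum _ hterm
  -- identify the sum limit value
  have hval : ∑ i ∈ Finset.range (κ + 1), ((M ^ i * x) ^ (-1/β) - 1) =
      (1 - M ^ (-((κ : ℝ) + 1) / β)) / (1 - M ^ (-1 / β)) * x ^ (-1 / β) - ((κ : ℝ) + 1) := by
    have h1 : ∀ i : ℕ, (M ^ i * x : ℝ) ^ (-1/β) = (M ^ (-1/β)) ^ i * x ^ (-1/β) := by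
      intro i
      rw [Real.mul_rpow (by positivity) hx.le, ← Real.rpow_natCast M i,
        ← Real.rpow_mul hM0.le, mul_comm (i:ℝ) (-1/β), Real.rpow_mul hM0.le,
        Real.rpow_natCast]
    simp only [h1, Finset.sum_sub_distrib, ← Finset.sum_mul, Finset.sum_const,
      Finset.card_range, nsmul_eq_mul, mul_one]
    have hneg : (-1/β : ℝ) < 0 := by
      rw [neg_div]
      exact neg_neg_iff_pos.2 (by positivity)
    have hr1 : M ^ (-1/β : ℝ) ≠ 1 :=
      ne_of_lt (Real.rpow_lt_one_of_one_lt_of_neg hM hneg)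
    rw [geom_sum_eq hr1]
    have h2 : (M ^ (-1/β : ℝ)) ^ (κ + 1) = M ^ (-((κ : ℝ) + 1) / β) := by
      rw [← Real.rpow_natCast (M ^ (-1/β : ℝ)) (κ+1), ← Real.rpow_mul hM0.le]
      congr 1
      push_cast
      ring
    rw [h2]
    have h3 : (M ^ (-((κ:ℝ)+1)/β) - 1)/(M ^ (-1/β : ℝ) - 1)
        = (1 - M ^ (-((κ:ℝ)+1)/β))/(1 - M ^ (-1/β : ℝ)) := by
      rw [← neg_sub, ← neg_sub (1:ℝ) (M ^ (-1/β : ℝ)), neg_div_neg_eq]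
    rw [h3]
    push_cast
    ring
  rw [← hval]
  -- now show the original function equals the sum eventually
  apply hsum.congr'
  filter_upwards [eventually_gt_atTop (0:ℝ)] with u hu
  rw [hgk, Finset.sum_div]
  apply Finset.sum_congr rfl
  intro i _
  rw [sub_div, div_self (ne_of_gt hu)]
end

section
/- Let δ > 0 and let g : (0,δ) → ℝ be continuous and strictly decreasing with lim_{t→0⁺} g(t) = D for some D ∈ ℝ, with inverse g⁻¹. Let γ > 0 and suppose that for every y > 0, lim_{s→0⁺} g⁻¹(D − s y) / g⁻¹(D − s) = y^{γ}. Let M > 1 and for κ ∈ ℕ₀ and u in the image of g define g_{κ,u}(t) := Σ_{i=0}^{κ} ( g(M^i t) − u ). Then for every κ ∈ ℕ₀ and every x > 0, lim_{u→D⁻} g_{κ,u}( x · g⁻¹(u) ) / (D − u) = (κ+1) − ( (1 − M^{(κ+1)/γ}) / (1 − M^{1/γ}) ) · x^{1/γ}. -/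
open Set Filter Topology

/-- Type 3 computation in the AOT analysis: with
`g_{κ,u}(t) = Σ_{i=0}^{κ}(g(Mⁱt) − u)`, one has
`g_{κ,u}(x·g⁻¹(u))/(D − u) → (κ+1) − ((1 − M^{(κ+1)/γ})/(1 − M^{1/γ}))·x^{1/γ}`
as `u → D⁻`. -/
theorem statement15 (δ : ℝ) (hδ : 0 < δ) (g ginv : ℝ → ℝ)
    (hgc : ContinuousOn g (Ioo 0 δ)) (hga : StrictAntiOn g (Ioo 0 δ))
    (D : ℝ) (hL : Tendsto g (nhdsWithin 0 (Ioi 0)) (nhds D))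
    (hginv : ∀ t ∈ Ioo 0 δ, ginv (g t) = t)
    (γ : ℝ) (hγ : 0 < γ)
    (hlim : ∀ y : ℝ, 0 < y →
      Tendsto (fun s => ginv (D - s * y) / ginv (D - s)) (nhdsWithin 0 (Ioi 0))
        (nhds (y ^ γ)))
    (M : ℝ) (hM : 1 < M)
    (gk : ℕ → ℝ → ℝ → ℝ)
    (hgk : ∀ (κ : ℕ) (u t : ℝ), gk κ u t = ∑ i ∈ Finset.range (κ + 1), (g (M ^ i * t) - u)) :
    ∀ (κ : ℕ) (x : ℝ), 0 < x →
      Tendsto (fun u => gk κ u (x * ginv u) / (D - u)) (nhdsWithin D (Iio D))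
        (nhds (((κ : ℝ) + 1) -
          (1 - M ^ (((κ : ℝ) + 1) / γ)) / (1 - M ^ (1 / γ)) * x ^ (1 / γ))) := by
  have hMpos : (0:ℝ) < M := lt_trans one_pos hM
  -- g is strictly below D on (0, δ)
  have hgD : ∀ t ∈ Ioo (0:ℝ) δ, g t < D := by
    intro t ht
    obtain ⟨ht0, htδ⟩ := ht
    have ht2 : t / 2 ∈ Ioo (0:ℝ) δ := ⟨by linarith, by linarith⟩
    have h1 : g t < g (t / 2) := hga ht2 ⟨ht0, htδ⟩ (by linarith)
    have h2 : g (t / 2) ≤ D := by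
      have hev : ∀ᶠ t'' in 𝓝[>] (0:ℝ), g (t / 2) ≤ g t'' := by
        filter_upwards [Ioo_mem_nhdsGT_of_mem ⟨le_refl (0:ℝ), show (0:ℝ) < t / 2 by linarith⟩]
          with t'' ht''
        exact (hga ⟨ht''.1, by linarith [ht''.2]⟩ ht2 ht''.2).le
      exact ge_of_tendsto hL hev
    linarith
  -- surjectivity of g near D: every u close to D is attained by g at small t
  have hsurj : ∀ ε : ℝ, 0 < ε → ε < δ → ∀ u : ℝ, g ε < u → u < D →
      ∃ t, 0 < t ∧ t < ε ∧ g t = u := by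
    intro ε hε hεδ u hu1 hu2
    have h1 : ∀ᶠ t' in 𝓝[>] (0:ℝ), u < g t' := hL.eventually (eventually_gt_nhds hu2)
    have h2 : ∀ᶠ t' in 𝓝[>] (0:ℝ), t' ∈ Ioo 0 ε :=
      Ioo_mem_nhdsGT_of_mem ⟨le_refl (0:ℝ), hε⟩
    obtain ⟨t', ht'u, ht'm⟩ := (h1.and h2).exists
    have hsub : Icc t' ε ⊆ Ioo 0 δ := fun z hz =>
      ⟨lt_of_lt_of_le ht'm.1 hz.1, lt_of_le_of_lt hz.2 hεδ⟩
    have hivt := intermediate_value_Icc' (le_of_lt ht'm.2) (hgc.mono hsub)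
    obtain ⟨t, htm, hgt⟩ := hivt ⟨hu1.le, ht'u.le⟩
    refine ⟨t, lt_of_lt_of_le ht'm.1 htm.1, ?_, hgt⟩
    rcases lt_or_eq_of_le htm.2 with h | h
    · exact h
    · exfalso; rw [h] at hgt; rw [hgt] at hu1; exact lt_irrefl u hu1
  -- ginv u is small and positive for u close to D from below
  have hginv_small : ∀ ε : ℝ, 0 < ε → ε < δ →
      ∀ᶠ u in 𝓝[<] D, 0 < ginv u ∧ ginv u < ε := by
    intro ε hε hεδ
    have hgεD : g ε < D := hgD ε ⟨hε, hεδ⟩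
    filter_upwards [Ioo_mem_nhdsLT_of_mem ⟨hgεD, le_refl D⟩] with u hu
    obtain ⟨t, ht0, htε, hgt⟩ := hsurj ε hε hεδ u hu.1 hu.2
    have : ginv u = t := by rw [← hgt, hginv t ⟨ht0, htε.trans hεδ⟩]
    rw [this]; exact ⟨ht0, htε⟩
  -- the map u ↦ D - u sends 𝓝[<] D to 𝓝[>] 0
  have hmap : Tendsto (fun u : ℝ => D - u) (𝓝[<] D) (𝓝[>] (0:ℝ)) := by
    apply tendsto_nhdsWithin_of_tendsto_nhds_of_eventually_within
    · have h : Tendsto (fun u : ℝ => D - u) (𝓝 D) (𝓝 (D - D)) :=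
        tendsto_const_nhds.sub tendsto_id
      simpa using h.mono_left nhdsWithin_le_nhds
    · filter_upwards [self_mem_nhdsWithin] with u hu
      simpa using hu
  have hpow_inv : ∀ z : ℝ, 0 < z → (z ^ (1/γ)) ^ γ = z := by
    intro z hz
    rw [← Real.rpow_mul hz.le, one_div, inv_mul_cancel₀ (ne_of_gt hγ), Real.rpow_one]
  -- core computation: (D - g(c·ginv u))/(D - u) → c^(1/γ)
  have core : ∀ c : ℝ, 0 < c →
      Tendsto (fun u => (D - g (c * ginv u)) / (D - u)) (𝓝[<] D) (𝓝 (c ^ (1/γ))) := by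
    intro c hc
    have hcγ : (0:ℝ) < c ^ (1/γ) := Real.rpow_pos_of_pos hc _
    -- a one-sided sandwich helper, lower side
    have hδ2 : (0:ℝ) < δ/2 := by linarith
    have hδ2δ : δ/2 < δ := by linarith
    have hgδ2 : g (δ/2) < D := hgD _ ⟨hδ2, hδ2δ⟩
    set ε₀ : ℝ := min (δ/2) (δ/(2*c)) with hε₀def
    have hε₀pos : 0 < ε₀ := lt_min hδ2 (by positivity)
    have hε₀δ : ε₀ < δ := lt_of_le_of_lt (min_le_left _ _) hδ2δ
    have hcε₀ : ∀ z : ℝ, 0 < z → z < ε₀ → c * z ∈ Ioo (0:ℝ) δ := by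
      intro z hz0 hzε
      constructor
      · positivity
      · have : z < δ/(2*c) := lt_of_lt_of_le hzε (min_le_right _ _)
        have : c * z < c * (δ/(2*c)) := by
          exact mul_lt_mul_of_pos_left this hc
        have hcz : c * (δ/(2*c)) = δ/2 := by field_simp
        linarith [hcz ▸ this]
    -- sandwich: for y with y^γ < c, eventually y < ratio; for y^γ > c, eventually ratio < y
    have hlow : ∀ y : ℝ, 0 < y → y ^ γ < c →
        ∀ᶠ u in 𝓝[<] D, y < (D - g (c * ginv u)) / (D - u) := by
      intro y hy hyγ
      have hratio : Tendsto (fun u => ginv (D - (D - u) * y) / ginv (D - (D - u)))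
          (𝓝[<] D) (𝓝 (y ^ γ)) := (hlim y hy).comp hmap
      have h2 : ∀ᶠ u in 𝓝[<] D, ginv (D - (D - u) * y) / ginv (D - (D - u)) < c :=
        hratio.eventually (eventually_lt_nhds hyγ)
      have h3 : ∀ᶠ u in 𝓝[<] D, (D - u) * y < D - g (δ/2) := by
        have ht : Tendsto (fun u : ℝ => (D - u) * y) (𝓝[<] D) (𝓝 ((0:ℝ) * y)) :=
          (hmap.mono_right nhdsWithin_le_nhds).mul_const y
        rw [zero_mul] at ht
        exact ht.eventually (eventually_lt_nhds (by linarith))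
      filter_upwards [h2, h3, hginv_small ε₀ hε₀pos hε₀δ, self_mem_nhdsWithin]
        with u h2 h3 h1 hu
      have hult : u < D := hu
      have hs : 0 < D - u := by linarith
      have hsy : 0 < (D - u) * y := mul_pos hs hy
      obtain ⟨t₁, ht₁0, ht₁ε, hgt₁⟩ :=
        hsurj (δ/2) hδ2 hδ2δ (D - (D - u) * y) (by linarith) (by linarith)
      have hginvt₁ : ginv (D - (D - u) * y) = t₁ := by
        rw [← hgt₁, hginv t₁ ⟨ht₁0, by linarith⟩]
      rw [sub_sub_cancel, hginvt₁] at h2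
      have ht₁lt : t₁ < c * ginv u := by
        rw [div_lt_iff₀ h1.1] at h2
        linarith [h2]
      have hcu : c * ginv u ∈ Ioo (0:ℝ) δ := hcε₀ _ h1.1 h1.2
      have hmono : g (c * ginv u) < g t₁ := hga ⟨ht₁0, by linarith⟩ hcu ht₁lt
      rw [hgt₁] at hmono
      rw [lt_div_iff₀ hs]
      linarith [hmono]
    have hhigh : ∀ y : ℝ, 0 < y → c < y ^ γ →
        ∀ᶠ u in 𝓝[<] D, (D - g (c * ginv u)) / (D - u) < y := by
      intro y hy hyγ
      have hratio : Tendsto (fun u => ginv (D - (D - u) * y) / ginv (D - (D - u)))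
          (𝓝[<] D) (𝓝 (y ^ γ)) := (hlim y hy).comp hmap
      have h2 : ∀ᶠ u in 𝓝[<] D, c < ginv (D - (D - u) * y) / ginv (D - (D - u)) :=
        hratio.eventually (eventually_gt_nhds hyγ)
      have h3 : ∀ᶠ u in 𝓝[<] D, (D - u) * y < D - g (δ/2) := by
        have ht : Tendsto (fun u : ℝ => (D - u) * y) (𝓝[<] D) (𝓝 ((0:ℝ) * y)) :=
          (hmap.mono_right nhdsWithin_le_nhds).mul_const y
        rw [zero_mul] at ht
        exact ht.eventually (eventually_lt_nhds (by linarith))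
      filter_upwards [h2, h3, hginv_small ε₀ hε₀pos hε₀δ, self_mem_nhdsWithin]
        with u h2 h3 h1 hu
      have hult : u < D := hu
      have hs : 0 < D - u := by linarith
      have hsy : 0 < (D - u) * y := mul_pos hs hy
      obtain ⟨t₂, ht₂0, ht₂ε, hgt₂⟩ :=
        hsurj (δ/2) hδ2 hδ2δ (D - (D - u) * y) (by linarith) (by linarith)
      have hginvt₂ : ginv (D - (D - u) * y) = t₂ := by
        rw [← hgt₂, hginv t₂ ⟨ht₂0, by linarith⟩]
      rw [sub_sub_cancel, hginvt₂] at h2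
      have ht₂gt : c * ginv u < t₂ := by
        rw [lt_div_iff₀ h1.1] at h2
        linarith [h2]
      have hcu : c * ginv u ∈ Ioo (0:ℝ) δ := hcε₀ _ h1.1 h1.2
      have hmono : g t₂ < g (c * ginv u) := hga hcu ⟨ht₂0, by linarith⟩ ht₂gt
      rw [hgt₂] at hmono
      rw [div_lt_iff₀ hs]
      linarith [hmono]
    rw [tendsto_order]
    constructor
    · intro a ha
      set y₁ : ℝ := max a (c ^ (1/γ) / 2) with hy₁def
      have hy₁pos : 0 < y₁ := lt_max_of_lt_right (by linarith)
      have hy₁lt : y₁ < c ^ (1/γ) := max_lt ha (by linarith)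
      have hy₁γ : y₁ ^ γ < c := by
        have h := Real.rpow_lt_rpow hy₁pos.le hy₁lt hγ
        rwa [hpow_inv c hc] at h
      filter_upwards [hlow y₁ hy₁pos hy₁γ] with u hu
      exact lt_of_le_of_lt (le_max_left _ _) hu
    · intro b hb
      set y₂ : ℝ := (b + c ^ (1/γ)) / 2 with hy₂def
      have hy₂gt : c ^ (1/γ) < y₂ := by rw [hy₂def]; linarith
      have hy₂pos : 0 < y₂ := lt_trans hcγ hy₂gt
      have hy₂γ : c < y₂ ^ γ := by
        have h := Real.rpow_lt_rpow hcγ.le hy₂gt hγ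
        rwa [hpow_inv c hc] at h
      filter_upwards [hhigh y₂ hy₂pos hy₂γ] with u hu
      calc (D - g (c * ginv u)) / (D - u) < y₂ := hu
        _ < b := by rw [hy₂def]; linarith
  -- assemble the sum
  intro κ x hx
  have hterm : ∀ i : ℕ, Tendsto
      (fun u => 1 - (D - g (M ^ i * x * ginv u)) / (D - u)) (𝓝[<] D)
      (𝓝 (1 - (M ^ i * x) ^ (1/γ))) := fun i =>
    tendsto_const_nhds.sub (core (M ^ i * x) (by positivity))
  have hsum := tendsto_finset_sum (Finset.range (κ+1)) (fun i _ => hterm i)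
  have heq : ∀ᶠ u in 𝓝[<] D,
      (∑ i ∈ Finset.range (κ+1), (1 - (D - g (M ^ i * x * ginv u)) / (D - u)))
        = gk κ u (x * ginv u) / (D - u) := by
    filter_upwards [self_mem_nhdsWithin] with u hu
    have hult : u < D := hu
    have hs : D - u ≠ 0 := sub_ne_zero_of_ne (ne_of_gt hult)
    rw [hgk, Finset.sum_div]
    apply Finset.sum_congr rfl
    intro i _
    rw [← mul_assoc]
    field_simp
    ring
  -- value equality
  have hMpow : ∀ n : ℕ, ((M:ℝ) ^ n) ^ (1/γ) = (M ^ (1/γ)) ^ n := by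
    intro n
    rw [← Real.rpow_natCast M n, ← Real.rpow_natCast (M ^ (1/γ)) n,
        ← Real.rpow_mul hMpos.le, ← Real.rpow_mul hMpos.le, mul_comm]
  have hM1γ : 1 < M ^ (1/γ) :=
    Real.one_lt_rpow_iff_of_pos hMpos |>.mpr (Or.inl ⟨hM, by positivity⟩)
  have hval : (∑ i ∈ Finset.range (κ+1), (1 - (M ^ i * x) ^ (1/γ)))
      = ((κ : ℝ) + 1) -
          (1 - M ^ (((κ : ℝ) + 1) / γ)) / (1 - M ^ (1 / γ)) * x ^ (1 / γ) := by
    have hterm_eq : ∀ i : ℕ, ((M:ℝ) ^ i * x) ^ (1/γ) = (M ^ (1/γ)) ^ i * x ^ (1/γ) := by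
      intro i
      rw [Real.mul_rpow (by positivity) hx.le, hMpow]
    simp only [hterm_eq, Finset.sum_sub_distrib, Finset.sum_const, Finset.card_range,
      nsmul_eq_mul, mul_one, ← Finset.sum_mul]
    rw [geom_sum_eq (ne_of_gt hM1γ)]
    have hpowκ : (M ^ (1/γ)) ^ (κ+1) = M ^ (((κ : ℝ) + 1) / γ) := by
      rw [← hMpow (κ+1), ← Real.rpow_natCast M (κ+1), ← Real.rpow_mul hMpos.le]
      push_cast
      ring_nf
    rw [hpowκ]
    have h1 : (M ^ (((κ:ℝ)+1)/γ) - 1) / (M ^ ((1:ℝ)/γ) - 1)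
        = (1 - M ^ (((κ:ℝ)+1)/γ)) / (1 - M ^ ((1:ℝ)/γ)) := by
      rw [← neg_div_neg_eq]
      ring_nf
    push_cast
    rw [h1]
  rw [← hval]
  exact hsum.congr' heq
end
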